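/- arXiv:1206.5933 — 6 statements merged into one kernel-verified Lean document; each statement's English description precedes it below -/
import Mathlib

section
/- Let V be a P-graded Q(q)-vector space with locally nilpotent operators e_i (i in I) raising weight by α_i, and let B be a perfect basis of V. Then for every k ≥ 0 and i ∈ I, the subspace V_i^{<k} := Ker(e_i^k) equals the span of the basis elements b ∈ B with ε_i(b) < k, where ε_i(b) := min{n ≥ 0 : e_i^{n+1} b = 0}. -/
/-- Let `V` be a `P`-graded `ℚ(q)`-vector space (with weights contained in a finite
union of cones `λ_j − Q⁺`) equipped with locally nilpotent operators `e_i` (`i ∈ I`) raising the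
weight by `α_i`, and let `B` be a perfect basis of `V`.  Then for every `k ≥ 0` and `i ∈ I`,
the subspace `V_i^{<k} := Ker(e_i^k)` equals the span of the basis elements `b ∈ B` with
`ε_i(b) < k`, where `ε_i(b) := min{n ≥ 0 : e_i^{n+1} b = 0}`. -/
theorem stmt_0 {V P I : Type*} [AddCommGroup V] [Module (RatFunc ℚ) V]
    [AddCommGroup P] [DecidableEq P]
    -- the P-grading, with e_i raising weights by α_i, wt(V) in a finite union of cones
    (α : I → P) (Vwt : P → Submodule (RatFunc ℚ) V)
    (hgrad : DirectSum.IsInternal Vwt)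
    (Λs : Finset P)
    (hcone : ∀ μ : P, Vwt μ ≠ ⊥ →
      ∃ lam ∈ Λs, ∃ c : I →₀ ℕ, μ + c.sum (fun i m => m • α i) = lam)
    (e : I → Module.End (RatFunc ℚ) V)
    (hraise : ∀ (i : I) (μ : P), ∀ v ∈ Vwt μ, e i v ∈ Vwt (μ + α i))
    (hnil : ∀ (i : I) (v : V), ∃ n : ℕ, (e i ^ n) v = 0)
    -- ε_i(v) = min{n ≥ 0 : e_i^{n+1} v = 0}
    (ε : I → V → ℕ)
    (hε1 : ∀ i v, (e i ^ (ε i v + 1)) v = 0)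
    (hε2 : ∀ i v n, (e i ^ (n + 1)) v = 0 → ε i v ≤ n)
    -- B is a basis of V
    (B : Set V)
    (hBindep : LinearIndependent (RatFunc ℚ) (fun b : B => (b : V)))
    (hBspan : Submodule.span (RatFunc ℚ) B = ⊤)
    -- (a) B consists of weight vectors
    (hBwt : ∀ b ∈ B, ∃ μ, b ∈ Vwt μ)
    -- (b) for b ∈ B with e_i b ≠ 0 there is a unique ẽ_i(b) ∈ B and c_i(b) ∈ ℚ(q)ˣ with
    --     e_i b − c_i(b) ẽ_i(b) ∈ V_i^{<ε_i(b)−1}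
    (etil : I → V → V) (c : I → V → RatFunc ℚ)
    (hperf : ∀ (i : I), ∀ b ∈ B, e i b ≠ 0 →
        etil i b ∈ B ∧ c i b ≠ 0 ∧
        e i b - c i b • etil i b ∈ LinearMap.ker (e i ^ (ε i b - 1)))
    (hperf_unique : ∀ (i : I), ∀ b ∈ B, e i b ≠ 0 → ∀ b' ∈ B, ∀ c' : RatFunc ℚ, c' ≠ 0 →
        e i b - c' • b' ∈ LinearMap.ker (e i ^ (ε i b - 1)) → b' = etil i b)
    -- (c) injectivity of ẽ_i on basis elements with equal positive ε_i
    (hinj : ∀ (i : I), ∀ b ∈ B, ∀ b' ∈ B, ε i b = ε i b' → 0 < ε i b →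
        etil i b = etil i b' → b = b') :
    ∀ (k : ℕ) (i : I),
      LinearMap.ker (e i ^ k)
        = Submodule.span (RatFunc ℚ) {b | b ∈ B ∧ ε i b < k} := by
  classical
  intro k i
  -- helper: if ε i v ≤ n then e^(n+1) v = 0
  have hle : ∀ (v : V) (n : ℕ), ε i v ≤ n → (e i ^ (n + 1)) v = 0 := by
    intro v n h
    have h2 : e i ^ (n + 1) = e i ^ (n - ε i v) * e i ^ (ε i v + 1) := by
      rw [← pow_add]; congr 1; omega
    rw [h2, Module.End.mul_apply, hε1, map_zero]
  have hlt : ∀ (v : V) (n : ℕ), ε i v < n → (e i ^ n) v = 0 := by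
    intro v n h
    have hn : n = (n - 1) + 1 := by omega
    rw [hn]; exact hle v (n - 1) (by omega)
  -- key lemma: a sum of distinct basis vectors with ε = m and nonzero coeffs survives e^m
  have key : ∀ (m n : ℕ) (bb : Fin n → V) (co : Fin n → RatFunc ℚ), 0 < n →
      (∀ j, bb j ∈ B) → Function.Injective bb → (∀ j, ε i (bb j) = m) →
      (∀ j, co j ≠ 0) → (e i ^ m) (∑ j, co j • bb j) ≠ 0 := by
    intro m
    induction m with
    | zero =>
      intro n bb co hn hmem hinjb hεb hco
      simp only [pow_zero, Module.End.one_apply]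
      intro h0
      have hli : LinearIndependent (RatFunc ℚ) bb :=
        hBindep.comp (fun j => (⟨bb j, hmem j⟩ : B))
          (fun j j' h => hinjb (congrArg Subtype.val h))
      exact hco ⟨0, hn⟩ (Fintype.linearIndependent_iff.mp hli co h0 ⟨0, hn⟩)
    | succ m ih =>
      intro n bb co hn hmem hinjb hεb hco
      have hne : ∀ j, e i (bb j) ≠ 0 := by
        intro j h
        have h1 : (e i ^ (0 + 1)) (bb j) = 0 := by simpa using h
        have := hε2 i (bb j) 0 h1
        have := hεb j
        omega
      have hP : ∀ j, etil i (bb j) ∈ B ∧ c i (bb j) ≠ 0 ∧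
          e i (bb j) - c i (bb j) • etil i (bb j) ∈ LinearMap.ker (e i ^ (ε i (bb j) - 1)) :=
        fun j => hperf i (bb j) (hmem j) (hne j)
      have hker : ∀ j, (e i ^ m) (e i (bb j) - c i (bb j) • etil i (bb j)) = 0 := by
        intro j
        have h1 := (hP j).2.2
        rw [LinearMap.mem_ker, hεb j] at h1
        simpa using h1
      set bb' : Fin n → V := fun j => etil i (bb j) with hbb'
      have hcomp : ∀ j, (e i ^ (m + 1)) (bb j) = c i (bb j) • (e i ^ m) (bb' j) := by
        intro j
        have h1 : (e i ^ (m + 1)) (bb j) = (e i ^ m) (e i (bb j)) := by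
          rw [pow_succ, Module.End.mul_apply]
        have h2 := hker j
        rw [map_sub, map_smul, sub_eq_zero] at h2
        rw [h1, h2]
      have hnz : ∀ j, (e i ^ m) (bb' j) ≠ 0 := by
        intro j h
        have h1 : (e i ^ (m + 1)) (bb j) = 0 := by rw [hcomp j, h, smul_zero]
        have h2 := hε2 i (bb j) m h1
        have := hεb j
        omega
      have hε' : ∀ j, ε i (bb' j) = m := by
        intro j
        have hup : (e i ^ (m + 1)) (bb' j) = 0 := by
          have h1 : (e i ^ (m + 2)) (bb j) = 0 := by
            have := hε1 i (bb j); rwa [hεb j] at this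
          have h2 : (e i ^ (m + 2)) (bb j) = c i (bb j) • (e i ^ (m + 1)) (bb' j) := by
            have h3 : (e i ^ (m + 2)) (bb j) = e i ((e i ^ (m + 1)) (bb j)) := by
              rw [pow_succ', Module.End.mul_apply]
            rw [h3, hcomp j, map_smul]
            congr 1
            rw [← Module.End.mul_apply, ← pow_succ']
          rw [h1] at h2
          rcases smul_eq_zero.mp h2.symm with h | h
          · exact absurd h (hP j).2.1
          · exact h
        have hub := hε2 i (bb' j) m hup
        by_contra hc
        exact hnz j (hlt (bb' j) m (by omega))
      have hinjb' : Function.Injective bb' := by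
        intro j j' h
        exact hinjb (hinj i (bb j) (hmem j) (bb j') (hmem j')
          (by rw [hεb j, hεb j']) (by rw [hεb j]; omega) h)
      have heq : (e i ^ (m + 1)) (∑ j, co j • bb j)
          = (e i ^ m) (∑ j, (co j * c i (bb j)) • bb' j) := by
        rw [map_sum, map_sum]
        refine Finset.sum_congr rfl fun j _ => ?_
        rw [map_smul, map_smul, hcomp j, smul_smul]
      rw [heq]
      exact ih n bb' (fun j => co j * c i (bb j)) hn (fun j => (hP j).1) hinjb' hε'
        (fun j => mul_ne_zero (hco j) (hP j).2.1)
  refine le_antisymm ?_ ?_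
  · -- ker ⊆ span
    intro v hv
    rw [LinearMap.mem_ker] at hv
    obtain ⟨f, hfsupp, hfsum⟩ := Submodule.mem_span_set.mp
      (show v ∈ Submodule.span (RatFunc ℚ) B by rw [hBspan]; exact Submodule.mem_top)
    set S2 := f.support.filter (fun b => k ≤ ε i b) with hS2def
    suffices hS2 : S2 = ∅ by
      rw [← hfsum, Finsupp.sum]
      apply Submodule.sum_mem
      intro b hb
      apply Submodule.smul_mem
      apply Submodule.subset_span
      refine ⟨hfsupp hb, ?_⟩
      have hnb : b ∉ S2 := by rw [hS2]; exact Finset.notMem_empty b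
      rw [hS2def, Finset.mem_filter] at hnb
      push_neg at hnb
      exact hnb hb
    by_contra hS2ne
    have hS2' : S2.Nonempty := Finset.nonempty_iff_ne_empty.mpr hS2ne
    set m := S2.sup (ε i) with hmdef
    obtain ⟨b0, hb0, hb0m⟩ := Finset.exists_mem_eq_sup S2 hS2' (ε i)
    have hkm : k ≤ m := by
      have := (Finset.mem_filter.mp hb0).2; omega
    set S3 := S2.filter (fun b => ε i b = m) with hS3def
    have hS3ne : S3.Nonempty := ⟨b0, Finset.mem_filter.mpr ⟨hb0, hb0m.symm⟩⟩
    have hS3sub : S3 ⊆ f.support := fun b hb =>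
      (Finset.mem_filter.mp (Finset.mem_filter.mp hb).1).1
    have hεmax : ∀ b ∈ f.support, b ∉ S3 → ε i b < m := by
      intro b hb hb3
      by_cases h : k ≤ ε i b
      · have hb2 : b ∈ S2 := Finset.mem_filter.mpr ⟨hb, h⟩
        have h1 : ε i b ≤ m := Finset.le_sup hb2
        have h2 : ε i b ≠ m := fun he => hb3 (Finset.mem_filter.mpr ⟨hb2, he⟩)
        omega
      · omega
    have hsplit : v = (∑ b ∈ f.support \ S3, f b • b) + ∑ b ∈ S3, f b • b := by
      rw [← hfsum, Finsupp.sum, ← Finset.sum_sdiff hS3sub]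
    have hEm : (e i ^ m) v = (e i ^ m) (∑ b ∈ S3, f b • b) := by
      rw [hsplit, map_add]
      have h0 : (e i ^ m) (∑ b ∈ f.support \ S3, f b • b) = 0 := by
        rw [map_sum]
        apply Finset.sum_eq_zero
        intro b hb
        rw [map_smul, hlt b m (hεmax b (Finset.mem_sdiff.mp hb).1 (Finset.mem_sdiff.mp hb).2),
          smul_zero]
      rw [h0, zero_add]
    have hzero : (e i ^ m) v = 0 := by
      have h1 : e i ^ m = e i ^ (m - k) * e i ^ k := by rw [← pow_add]; congr 1; omega
      rw [h1, Module.End.mul_apply, hv, map_zero]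
    -- convert S3-sum to a Fin-indexed sum and contradict `key`
    set n := S3.card with hndef
    have hn : 0 < n := Finset.card_pos.mpr hS3ne
    set eqv := S3.equivFin with heqv
    set bb : Fin n → V := fun j => ((eqv.symm j : S3) : V) with hbbdef
    have hbbmem : ∀ j, bb j ∈ S3 := fun j => (eqv.symm j).2
    have hsum : (∑ b ∈ S3, f b • b) = ∑ j, f (bb j) • bb j := by
      rw [← Finset.sum_coe_sort S3 (fun b => f b • b)]
      exact (Equiv.sum_comp eqv.symm (fun x : S3 => f (x : V) • (x : V))).symm
    refine key m n bb (fun j => f (bb j)) hn ?_ ?_ ?_ ?_ ?_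
    · exact fun j => hfsupp (hS3sub (hbbmem j))
    · exact fun j j' h => by
        have := Subtype.val_injective h
        exact eqv.symm.injective (by exact Subtype.val_injective h)
    · exact fun j => (Finset.mem_filter.mp (hbbmem j)).2
    · exact fun j => Finsupp.mem_support_iff.mp (hS3sub (hbbmem j))
    · rw [← hsum, ← hEm]; exact hzero
  · -- span ⊆ ker
    rw [Submodule.span_le]
    intro b hb
    rw [SetLike.mem_coe, LinearMap.mem_ker]
    exact hlt b k hb.2
end

section
/- Let V be as above with a perfect basis B, and let V^H := {v ∈ V : e_i v = 0 for all i ∈ I} and B^H := B ∩ V^H. Then V^H is the Q(q)-span of B^H. -/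
open Function Set

lemma perfect_aux {K V ι : Type*} [Field K] [AddCommGroup V] [Module K V]
    (e : Module.End K V) (ε : V → ℕ) (B : Set V)
    (hBindep : LinearIndependent K (fun b : B => (b : V)))
    (hε1 : ∀ v, (e ^ (ε v + 1)) v = 0)
    (hε2 : ∀ v n, (e ^ (n + 1)) v = 0 → ε v ≤ n)
    (etil : V → V) (c : V → K)
    (hperf : ∀ b ∈ B, e b ≠ 0 → etil b ∈ B ∧ c b ≠ 0 ∧
        e b - c b • etil b ∈ LinearMap.ker (e ^ (ε b - 1)))
    (hinj : ∀ b ∈ B, ∀ b' ∈ B, ε b = ε b' → 0 < ε b → etil b = etil b' → b = b') :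
    ∀ m : ℕ, ∀ (s : Finset ι) (f : ι → V) (coef : ι → K),
      (∀ a ∈ s, f a ∈ B) → (∀ a ∈ s, ε (f a) = m) → Set.InjOn f s →
      (∑ a ∈ s, coef a • (e ^ m) (f a)) = 0 → ∀ a ∈ s, coef a = 0 := by
  intro m
  induction m with
  | zero =>
    intro s f coef hfB hεf hInj hsum a ha
    classical
    haveI : Nonempty ι := ⟨a⟩
    set g : B → K := fun x => coef (invFunOn f ↑s (x : V)) with hg
    have hmapinj : ∀ x ∈ s.attach, ∀ y ∈ s.attach,
        (⟨f x.1, hfB x.1 x.2⟩ : B) = ⟨f y.1, hfB y.1 y.2⟩ → x = y := by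
      intro x _ y _ hxy
      exact Subtype.ext (hInj x.2 y.2 (congrArg Subtype.val hxy))
    have hsum' : ∑ x ∈ s.attach.image (fun a => (⟨f a.1, hfB a.1 a.2⟩ : B)),
        g x • (x : V) = 0 := by
      rw [Finset.sum_image hmapinj]
      calc ∑ x ∈ s.attach, g ⟨f x.1, hfB x.1 x.2⟩ • (f x.1)
          = ∑ x ∈ s.attach, coef x.1 • (e ^ 0) (f x.1) := by
            refine Finset.sum_congr rfl fun x _ => ?_
            rw [hg]
            simp only [pow_zero, Module.End.one_apply]
            congr 1
            exact congrArg coef (hInj.leftInvOn_invFunOn x.2)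
        _ = 0 := by rw [Finset.sum_attach s (fun a => coef a • (e ^ 0) (f a))]; exact hsum
    have := linearIndependent_iff'.mp hBindep _ g hsum' ⟨f a, hfB a ha⟩
      (Finset.mem_image.mpr ⟨⟨a, ha⟩, Finset.mem_attach _ _, rfl⟩)
    rw [hg] at this
    simpa [hInj.leftInvOn_invFunOn ha] using this
  | succ m ih =>
    intro s f coef hfB hεf hInj hsum a ha
    -- basic facts about each b = f a'
    have key : ∀ a' ∈ s, e (f a') ≠ 0 ∧ etil (f a') ∈ B ∧ c (f a') ≠ 0 ∧
        ε (etil (f a')) = m ∧ (e ^ (m + 1)) (f a') = c (f a') • (e ^ m) (etil (f a')) := by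
      intro a' ha'
      set b := f a' with hb
      have hεb : ε b = m + 1 := hεf a' ha'
      have hne : e b ≠ 0 := by
        intro h0
        have : ε b ≤ 0 := hε2 b 0 (by simpa using h0)
        omega
      obtain ⟨hB1, hc1, hker⟩ := hperf b (hfB a' ha') hne
      rw [hεb] at hker
      simp only [Nat.add_sub_cancel] at hker
      have hkm : (e ^ m) (e b - c b • etil b) = 0 := hker
      have hcomp : (e ^ (m + 1)) b = c b • (e ^ m) (etil b) := by
        have : (e ^ (m + 1)) b = (e ^ m) (e b) := by
          rw [pow_succ]; rfl
        rw [this]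
        have : e b = (e b - c b • etil b) + c b • etil b := by abel
        rw [this, map_add, hkm, map_smul, zero_add]
      have hnz : (e ^ (m + 1)) b ≠ 0 := by
        intro h0
        have := hε2 b m h0
        omega
      have hεet_le : ε (etil b) ≤ m := by
        apply hε2
        have h1 : (e ^ (m + 1 + 1)) b = c b • (e ^ (m + 1)) (etil b) := by
          have : (e ^ (m + 1 + 1)) b = e ((e ^ (m + 1)) b) := by
            rw [pow_succ']; rfl
          rw [this, hcomp, map_smul]
          congr 1
          rw [pow_succ']; rfl
        have h2 : (e ^ (m + 1 + 1)) b = 0 := by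
          have := hε1 b; rwa [hεb] at this
        rw [h2] at h1
        exact (smul_eq_zero.mp h1.symm).resolve_left hc1
      have hεet_ge : m ≤ ε (etil b) := by
        by_contra hlt
        push_neg at hlt
        have h0 : (e ^ m) (etil b) = 0 := by
          have hd : m = (m - (ε (etil b) + 1)) + (ε (etil b) + 1) := by omega
          rw [hd, pow_add, Module.End.mul_apply, hε1, map_zero]
        rw [hcomp, h0, smul_zero] at hnz
        exact hnz rfl
      exact ⟨hne, hB1, hc1, le_antisymm hεet_le hεet_ge, hcomp⟩
    have happ := ih s (fun a' => etil (f a')) (fun a' => coef a' * c (f a'))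
      (fun a' ha' => (key a' ha').2.1)
      (fun a' ha' => (key a' ha').2.2.2.1)
      (by
        intro x hx y hy hxy
        refine hInj hx hy ?_
        exact hinj (f x) (hfB x hx) (f y) (hfB y hy)
          (by rw [hεf x hx, hεf y hy]) (by rw [hεf x hx]; omega) hxy)
      (by
        calc ∑ a' ∈ s, (coef a' * c (f a')) • (e ^ m) (etil (f a'))
            = ∑ a' ∈ s, coef a' • (e ^ (m + 1)) (f a') := by
              refine Finset.sum_congr rfl fun a' ha' => ?_
              rw [(key a' ha').2.2.2.2, mul_smul]
          _ = 0 := hsum)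
      a ha
    exact (mul_eq_zero.mp happ).resolve_right (key a ha).2.2.1

/-- Let `V` be a `P`-graded `ℚ(q)`-vector space with weight-raising, locally
nilpotent operators `e_i` and a perfect basis `B`, and let `V^H := {v ∈ V : e_i v = 0 ∀ i}`
and `B^H := B ∩ V^H`.  Then `V^H` is the `ℚ(q)`-span of `B^H`. -/
theorem stmt_1 {V P I : Type*} [AddCommGroup V] [Module (RatFunc ℚ) V]
    [AddCommGroup P] [DecidableEq P]
    -- the P-grading, with e_i raising weights by α_i, wt(V) in a finite union of cones
    (α : I → P) (Vwt : P → Submodule (RatFunc ℚ) V)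
    (hgrad : DirectSum.IsInternal Vwt)
    (Λs : Finset P)
    (hcone : ∀ μ : P, Vwt μ ≠ ⊥ →
      ∃ lam ∈ Λs, ∃ c : I →₀ ℕ, μ + c.sum (fun i m => m • α i) = lam)
    (e : I → Module.End (RatFunc ℚ) V)
    (hraise : ∀ (i : I) (μ : P), ∀ v ∈ Vwt μ, e i v ∈ Vwt (μ + α i))
    (hnil : ∀ (i : I) (v : V), ∃ n : ℕ, (e i ^ n) v = 0)
    -- ε_i(v) = min{n ≥ 0 : e_i^{n+1} v = 0}
    (ε : I → V → ℕ)
    (hε1 : ∀ i v, (e i ^ (ε i v + 1)) v = 0)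
    (hε2 : ∀ i v n, (e i ^ (n + 1)) v = 0 → ε i v ≤ n)
    -- B is a basis of V
    (B : Set V)
    (hBindep : LinearIndependent (RatFunc ℚ) (fun b : B => (b : V)))
    (hBspan : Submodule.span (RatFunc ℚ) B = ⊤)
    -- (a) B consists of weight vectors
    (hBwt : ∀ b ∈ B, ∃ μ, b ∈ Vwt μ)
    -- (b) for b ∈ B with e_i b ≠ 0 there is a unique ẽ_i(b) ∈ B and c_i(b) ∈ ℚ(q)ˣ with
    --     e_i b − c_i(b) ẽ_i(b) ∈ V_i^{<ε_i(b)−1}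
    (etil : I → V → V) (c : I → V → RatFunc ℚ)
    (hperf : ∀ (i : I), ∀ b ∈ B, e i b ≠ 0 →
        etil i b ∈ B ∧ c i b ≠ 0 ∧
        e i b - c i b • etil i b ∈ LinearMap.ker (e i ^ (ε i b - 1)))
    (hperf_unique : ∀ (i : I), ∀ b ∈ B, e i b ≠ 0 → ∀ b' ∈ B, ∀ c' : RatFunc ℚ, c' ≠ 0 →
        e i b - c' • b' ∈ LinearMap.ker (e i ^ (ε i b - 1)) → b' = etil i b)
    -- (c) injectivity of ẽ_i on basis elements with equal positive ε_i
    (hinj : ∀ (i : I), ∀ b ∈ B, ∀ b' ∈ B, ε i b = ε i b' → 0 < ε i b →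
        etil i b = etil i b' → b = b') :
    (⨅ i : I, LinearMap.ker (e i))
      = Submodule.span (RatFunc ℚ) {b | b ∈ B ∧ ∀ i : I, e i b = 0} := by
  classical
  apply le_antisymm
  · intro v hv
    rw [Submodule.mem_iInf] at hv
    have hvB : v ∈ Submodule.span (RatFunc ℚ) B := by rw [hBspan]; exact Submodule.mem_top
    obtain ⟨l, hlsupp, hlsum⟩ := Submodule.mem_span_set.mp hvB
    have key : ∀ b ∈ l.support, ∀ i, e i b = 0 := by
      intro b hb i
      -- show ε i b' = 0 for all b' in the support
      have hall : ∀ b' ∈ l.support, ε i b' = 0 := by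
        by_contra hcon
        push_neg at hcon
        obtain ⟨b0, hb0, hb0ne⟩ := hcon
        set n := l.support.sup (fun b' => ε i b') with hn
        have hnpos : 0 < n := lt_of_lt_of_le (Nat.pos_of_ne_zero hb0ne)
          (Finset.le_sup hb0)
        set S := l.support.filter (fun b' => ε i b' = n) with hS
        obtain ⟨bm, hbm, hbmax⟩ := Finset.exists_mem_eq_sup l.support
          ⟨b0, hb0⟩ (fun b' => ε i b')
        have hbmS : bm ∈ S := Finset.mem_filter.mpr ⟨hbm, hbmax.symm⟩
        -- e^n v = 0
        have hvn : (e i ^ n) v = 0 := by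
          obtain ⟨k, hk⟩ : ∃ k, n = k + 1 := ⟨n - 1, by omega⟩
          rw [hk, pow_succ, Module.End.mul_apply]
          have : e i v = 0 := hv i
          rw [this, map_zero]
        -- e^n v = sum over S
        have hsum : ∑ b' ∈ S, l b' • (e i ^ n) b' = 0 := by
          have h1 : (e i ^ n) v = ∑ b' ∈ l.support, l b' • (e i ^ n) b' := by
            rw [← hlsum, Finsupp.sum, map_sum]
            exact Finset.sum_congr rfl fun b' _ => map_smul _ _ _
          have h2 : ∑ b' ∈ l.support, l b' • (e i ^ n) b'
              = ∑ b' ∈ S, l b' • (e i ^ n) b' := by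
            refine (Finset.sum_filter_of_ne ?_).symm
            intro b' hb' hne
            by_contra hεne
            have hlt : ε i b' + 1 ≤ n :=
              lt_of_le_of_ne (Finset.le_sup hb') hεne
            apply hne
            have hd : n = (n - (ε i b' + 1)) + (ε i b' + 1) := by omega
            rw [hd, pow_add, Module.End.mul_apply, hε1, map_zero, smul_zero]
          rw [← h2, ← h1, hvn]
        have := perfect_aux (e i) (ε i) B hBindep (hε1 i) (hε2 i) (etil i) (c i)
          (hperf i) (hinj i) n S id l
          (fun b' hb' => hlsupp (Finset.mem_filter.mp hb').1)
          (fun b' hb' => (Finset.mem_filter.mp hb').2)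
          (Set.injOn_id _)
          hsum bm hbmS
        exact Finsupp.mem_support_iff.mp hbm this
      have := hε1 i b
      rw [hall b hb, pow_one] at this
      exact this
    rw [← hlsum]
    rw [Finsupp.sum]
    apply Submodule.sum_mem
    intro b hb
    exact Submodule.smul_mem _ _ (Submodule.subset_span ⟨hlsupp hb, key b hb⟩)
  · rw [Submodule.span_le]
    rintro b ⟨hbB, hb⟩
    simp only [SetLike.mem_coe, Submodule.mem_iInf, LinearMap.mem_ker]
    intro i
    exact hb i
end

section
/- Let B be a strong perfect basis of V, let b₀ ∈ B^H and let 𝐢 = (i₁,…,i_m) be a finite sequence in I. Then the set S := {b ∈ B : e_𝐢^top(b) = b₀} is linearly ordered by the binary relation ⪯_𝐢. -/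
/-- `q_i := q^{s_i}` inside `ℚ(q) = RatFunc ℚ` (with `q = X`). -/
noncomputable def qpow (s : ℕ) : RatFunc ℚ := RatFunc.X ^ s

/-- The q-integer `[n]_i = (q_i^n − q_i^{−n})/(q_i − q_i^{−1})`. -/
noncomputable def qInt (s : ℕ) (n : ℕ) : RatFunc ℚ :=
  ((qpow s) ^ n - (qpow s)⁻¹ ^ n) / (qpow s - (qpow s)⁻¹)

/-- The q-factorial `[m]_i!`. -/
noncomputable def qFact (s : ℕ) (m : ℕ) : RatFunc ℚ :=
  ∏ j ∈ Finset.range m, qInt s (j + 1)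

/-- `e_ii^top = e_{i_m}^top ∘ ⋯ ∘ e_{i_1}^top`, where
`e_i^top (v) = e_i^{(ε_i(v))} v = ([ε_i(v)]_i!)⁻¹ e_i^{ε_i(v)} v`. -/
noncomputable def eTopList {V I : Type*} [AddCommGroup V] [Module (RatFunc ℚ) V]
    (s : I → ℕ) (e : I → Module.End (RatFunc ℚ) V) (ε : I → V → ℕ) :
    List I → V → V
  | [], v => v
  | i :: is, v => eTopList s e ε is ((qFact (s i) (ε i v))⁻¹ • (e i ^ ε i v) v)

/-- The binary relation `⪯_ii`, defined inductively on the sequence `ii`: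
for `ii = (i)`, `v ⪯ v'` iff `ε_i(v) ≤ ε_i(v')`; for `ii = (i; ii')`, `v ⪯_ii v'` iff
`ε_i(v) < ε_i(v')`, or `ε_i(v) = ε_i(v')` and `e_i^{ε_i(v)} v ⪯_{ii'} e_i^{ε_i(v')} v'`. -/
def precRel {V I : Type*} (e : I → V → V) (ε : I → V → ℕ) :
    List I → V → V → Prop
  | [], _, _ => True
  | i :: is, v, v' =>
      ε i v < ε i v' ∨
        (ε i v = ε i v' ∧ precRel e ε is ((e i)^[ε i v] v) ((e i)^[ε i v'] v'))

/- ### Auxiliary lemmas -/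

lemma my_X_pow_ne_one {m : ℕ} (hm : 0 < m) : (RatFunc.X : RatFunc ℚ) ^ m ≠ 1 := by
  intro h
  have : (algebraMap (Polynomial ℚ) (RatFunc ℚ)) (Polynomial.X ^ m) =
      (algebraMap (Polynomial ℚ) (RatFunc ℚ)) 1 := by
    simpa [map_pow, RatFunc.algebraMap_X] using h
  have h2 := RatFunc.algebraMap_injective ℚ this
  have := congrArg Polynomial.natDegree h2
  simp [Polynomial.natDegree_X_pow] at this
  omega

lemma my_qpow_ne_zero (s : ℕ) : qpow s ≠ 0 := pow_ne_zero _ RatFunc.X_ne_zero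

lemma my_sub_inv_pow_ne_zero {s m : ℕ} (hs : 0 < s) (hm : 0 < m) :
    (qpow s) ^ m - ((qpow s)⁻¹) ^ m ≠ 0 := by
  intro h
  have h0 : (qpow s) ^ m = ((qpow s) ^ m)⁻¹ := by
    rw [sub_eq_zero, inv_pow] at h; exact h
  have hne : (qpow s) ^ m ≠ 0 := pow_ne_zero _ (my_qpow_ne_zero s)
  have : (qpow s) ^ m * (qpow s) ^ m = 1 := by
    nth_rewrite 2 [h0]; exact mul_inv_cancel₀ hne
  have : (RatFunc.X : RatFunc ℚ) ^ (s * m + s * m) = 1 := by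
    rw [pow_add]
    simpa [qpow, ← pow_mul] using this
  exact my_X_pow_ne_one (by positivity) this

lemma my_qInt_ne_zero {s n : ℕ} (hs : 0 < s) (hn : 0 < n) : qInt s n ≠ 0 := by
  unfold qInt
  exact div_ne_zero (my_sub_inv_pow_ne_zero hs hn)
    (by simpa using my_sub_inv_pow_ne_zero hs (Nat.one_pos))

lemma my_qFact_ne_zero {s : ℕ} (hs : 0 < s) (m : ℕ) : qFact s m ≠ 0 := by
  unfold qFact
  exact Finset.prod_ne_zero_iff.2 fun j _ => my_qInt_ne_zero hs (Nat.succ_pos j)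

section helpers

variable {V I : Type*} [AddCommGroup V] [Module (RatFunc ℚ) V]
  (e : I → Module.End (RatFunc ℚ) V) (ε : I → V → ℕ)
  (hε1 : ∀ i v, (e i ^ (ε i v + 1)) v = 0)
  (hε2 : ∀ i v n, (e i ^ (n + 1)) v = 0 → ε i v ≤ n)

include hε1 hε2 in
lemma my_eps_smul (i : I) (v : V) {c : RatFunc ℚ} (hc : c ≠ 0) : ε i (c • v) = ε i v := by
  apply le_antisymm
  · exact hε2 i _ _ (by rw [map_smul, hε1 i v, smul_zero])
  · apply hε2 i _ _
    have h := hε1 i (c • v)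
    have h2 : (e i ^ (ε i (c • v) + 1)) v = c⁻¹ • (e i ^ (ε i (c • v) + 1)) (c • v) := by
      rw [map_smul, smul_smul, inv_mul_cancel₀ hc, one_smul]
    rw [h2, h, smul_zero]

include hε1 in
lemma my_pow_zero_of_lt (i : I) (v : V) (m : ℕ) (h : ε i v < m) : (e i ^ m) v = 0 := by
  obtain ⟨k, rfl⟩ : ∃ k, m = (ε i v + 1) + k := ⟨m - (ε i v + 1), by omega⟩
  rw [add_comm, pow_add, Module.End.mul_apply, hε1, map_zero]

include hε2 in
lemma my_pow_eps_ne_zero (i : I) (v : V) (h : 0 < ε i v) : (e i ^ ε i v) v ≠ 0 := by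
  intro h0
  obtain ⟨k, hk⟩ : ∃ k, ε i v = k + 1 := ⟨ε i v - 1, by omega⟩
  rw [hk] at h0
  have := hε2 i v k h0
  omega

include hε1 hε2 in
lemma my_precRel_smul :
    ∀ (l : List I) (v v' : V) (c c' : RatFunc ℚ), c ≠ 0 → c' ≠ 0 →
      (precRel (fun i => ⇑(e i)) ε l (c • v) (c' • v') ↔
        precRel (fun i => ⇑(e i)) ε l v v') := by
  intro l
  induction l with
  | nil => intro v v' c c' hc hc'; simp [precRel]
  | cons i l ih =>
    intro v v' c c' hc hc'
    simp only [precRel]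
    rw [my_eps_smul e ε hε1 hε2 i v hc, my_eps_smul e ε hε1 hε2 i v' hc']
    have h1 : (⇑(e i))^[ε i v] (c • v) = c • (⇑(e i))^[ε i v] v := by
      rw [← Module.End.pow_apply, ← Module.End.pow_apply, map_smul]
    have h2 : (⇑(e i))^[ε i v'] (c' • v') = c' • (⇑(e i))^[ε i v'] v' := by
      rw [← Module.End.pow_apply, ← Module.End.pow_apply, map_smul]
    rw [h1, h2, ih _ _ c c' hc hc']

end helpers

theorem stmt_2 {V P I : Type*} [AddCommGroup V] [Module (RatFunc ℚ) V]
    [AddCommGroup P] [DecidableEq P]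
    (s : I → ℕ) (hs : ∀ i, 0 < s i)
    (α : I → P) (Vwt : P → Submodule (RatFunc ℚ) V)
    (hgrad : DirectSum.IsInternal Vwt)
    (e : I → Module.End (RatFunc ℚ) V)
    (hraise : ∀ (i : I) (μ : P), ∀ v ∈ Vwt μ, e i v ∈ Vwt (μ + α i))
    (hnil : ∀ (i : I) (v : V), ∃ n : ℕ, (e i ^ n) v = 0)
    (ε : I → V → ℕ)
    (hε1 : ∀ i v, (e i ^ (ε i v + 1)) v = 0)
    (hε2 : ∀ i v n, (e i ^ (n + 1)) v = 0 → ε i v ≤ n)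
    (B : Set V)
    (hBindep : LinearIndependent (RatFunc ℚ) (fun b : B => (b : V)))
    (hBspan : Submodule.span (RatFunc ℚ) B = ⊤)
    (hBwt : ∀ b ∈ B, ∃ μ, b ∈ Vwt μ)
    -- strong perfect basis: e_i b − [ε_i(b)]_i ẽ_i(b) ∈ Ker e_i^{ε_i(b)−1}
    (etil : I → V → V)
    (hperf : ∀ (i : I), ∀ b ∈ B, e i b ≠ 0 →
        etil i b ∈ B ∧
        e i b - qInt (s i) (ε i b) • etil i b ∈ LinearMap.ker (e i ^ (ε i b - 1)))
    (hinj : ∀ (i : I), ∀ b ∈ B, ∀ b' ∈ B, ε i b = ε i b' → 0 < ε i b →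
        etil i b = etil i b' → b = b')
    -- b₀ ∈ B^H and the sequence ii
    (b₀ : V) (hb₀B : b₀ ∈ B) (hb₀H : ∀ i : I, e i b₀ = 0)
    (ii : List I) :
    ∀ b ∈ {b | b ∈ B ∧ eTopList s e ε ii b = b₀},
      ∀ b' ∈ {b | b ∈ B ∧ eTopList s e ε ii b = b₀},
        (precRel (fun i => ⇑(e i)) ε ii b b' ∨ precRel (fun i => ⇑(e i)) ε ii b' b) ∧
        (precRel (fun i => ⇑(e i)) ε ii b b' → precRel (fun i => ⇑(e i)) ε ii b' b → b = b') := by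
  classical
  have hene : ∀ (i : I) (b : V), 0 < ε i b → e i b ≠ 0 := by
    intro i b h hb0
    have := hε2 i b 0 (by simpa using hb0)
    omega
  -- one step of the "top" operation
  have keyStep : ∀ (i : I) (n : ℕ), ∀ b ∈ B, ε i b = n + 1 →
      etil i b ∈ B ∧ ε i (etil i b) = n ∧
      (e i ^ (n + 1)) b = qInt (s i) (n + 1) • (e i ^ n) (etil i b) := by
    intro i n b hb hn
    have hne : e i b ≠ 0 := hene i b (by omega)
    obtain ⟨hetB, hker⟩ := hperf i b hb hne
    rw [hn] at hker
    simp only [Nat.add_sub_cancel, LinearMap.mem_ker] at hker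
    -- hker : (e i ^ n) (e i b - qInt (s i) (n+1) • etil i b) = 0
    have hq0 : qInt (s i) (n + 1) ≠ 0 := my_qInt_ne_zero (hs i) (Nat.succ_pos n)
    have step1 : (e i ^ (n + 1)) b = qInt (s i) (n + 1) • (e i ^ n) (etil i b) := by
      have : (e i ^ (n + 1)) b = (e i ^ n) (e i b) := by
        rw [pow_succ, Module.End.mul_apply]
      rw [this]
      have hb2 : e i b = (e i b - qInt (s i) (n + 1) • etil i b) +
          qInt (s i) (n + 1) • etil i b := by abel
      rw [hb2, map_add, hker, map_smul, zero_add]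
    have step2 : (e i ^ (n + 1)) (etil i b) = 0 := by
      have h1 : (e i ^ (n + 1)) (qInt (s i) (n + 1) • etil i b) = 0 := by
        have hb2 : qInt (s i) (n + 1) • etil i b =
            e i b - (e i b - qInt (s i) (n + 1) • etil i b) := by abel
        rw [hb2, map_sub]
        have hz1 : (e i ^ (n + 1)) (e i b) = 0 := by
          have h3 : (e i ^ (n + 2)) b = (e i ^ (n + 1)) (e i b) := by
            rw [pow_succ, Module.End.mul_apply]
          rw [← h3]
          exact my_pow_zero_of_lt e ε hε1 i b (n + 2) (by omega)
        have hz2 : (e i ^ (n + 1)) (e i b - qInt (s i) (n + 1) • etil i b) = 0 := by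
          rw [pow_succ', Module.End.mul_apply, hker, map_zero]
        rw [hz1, hz2, sub_zero]
      rw [map_smul, smul_eq_zero] at h1
      exact h1.resolve_left hq0
    have heps : ε i (etil i b) = n := by
      apply le_antisymm (hε2 i _ n step2)
      by_contra hlt
      push_neg at hlt
      have h0 : (e i ^ n) (etil i b) = 0 :=
        my_pow_zero_of_lt e ε hε1 i (etil i b) n hlt
      have : (e i ^ (n + 1)) b = 0 := by rw [step1, h0, smul_zero]
      have hne2 := my_pow_eps_ne_zero e ε hε2 i b (by omega)
      rw [hn] at hne2
      exact hne2 this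
    exact ⟨hetB, heps, step1⟩
  -- full "top" operation
  have keyA : ∀ (i : I) (n : ℕ), ∀ b ∈ B, ε i b = n →
      (etil i)^[n] b ∈ B ∧ (e i ^ n) b = qFact (s i) n • (etil i)^[n] b := by
    intro i n
    induction n with
    | zero =>
      intro b hb _
      refine ⟨by simpa using hb, ?_⟩
      simp [qFact]
    | succ n ih =>
      intro b hb hn
      obtain ⟨hetB, heps, hstep⟩ := keyStep i n b hb hn
      obtain ⟨hB2, hpow⟩ := ih (etil i b) hetB heps
      rw [Function.iterate_succ_apply]
      refine ⟨hB2, ?_⟩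
      rw [hstep, hpow, smul_smul]
      congr 1
      simp only [qFact, Finset.prod_range_succ]
      ring
  -- injectivity of the full top operation at fixed ε
  have keyB : ∀ (i : I) (n : ℕ), ∀ b ∈ B, ∀ b' ∈ B, ε i b = n → ε i b' = n →
      (etil i)^[n] b = (etil i)^[n] b' → b = b' := by
    intro i n
    induction n with
    | zero => intro b _ b' _ _ _ h; simpa using h
    | succ n ih =>
      intro b hb b' hb' hn hn' h
      obtain ⟨hetB, heps, -⟩ := keyStep i n b hb hn
      obtain ⟨hetB', heps', -⟩ := keyStep i n b' hb' hn'
      rw [Function.iterate_succ_apply, Function.iterate_succ_apply] at h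
      have := ih (etil i b) hetB (etil i b') hetB' heps heps' h
      exact hinj i b hb b' hb' (hn.trans hn'.symm) (by omega) this
  suffices H : ∀ (l : List I), ∀ b ∈ B, ∀ b' ∈ B,
      eTopList s e ε l b = b₀ → eTopList s e ε l b' = b₀ →
      (precRel (fun i => ⇑(e i)) ε l b b' ∨ precRel (fun i => ⇑(e i)) ε l b' b) ∧
      (precRel (fun i => ⇑(e i)) ε l b b' → precRel (fun i => ⇑(e i)) ε l b' b → b = b') by
    intro b hb b' hb'
    exact H ii b hb.1 b' hb'.1 hb.2 hb'.2
  intro l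
  induction l with
  | nil =>
    intro b _ b' _ h h'
    simp only [eTopList] at h h'
    refine ⟨Or.inl trivial, fun _ _ => ?_⟩
    rw [h, h']
  | cons i l ih =>
    intro b hb b' hb' h h'
    obtain ⟨htB, hpow⟩ := keyA i (ε i b) b hb rfl
    obtain ⟨htB', hpow'⟩ := keyA i (ε i b') b' hb' rfl
    have hfact : qFact (s i) (ε i b) ≠ 0 := my_qFact_ne_zero (hs i) _
    have hfact' : qFact (s i) (ε i b') ≠ 0 := my_qFact_ne_zero (hs i) _
    have hred : eTopList s e ε (i :: l) b = eTopList s e ε l ((etil i)^[ε i b] b) := by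
      simp only [eTopList]
      rw [hpow, inv_smul_smul₀ hfact]
    have hred' : eTopList s e ε (i :: l) b' =
        eTopList s e ε l ((etil i)^[ε i b'] b') := by
      simp only [eTopList]
      rw [hpow', inv_smul_smul₀ hfact']
    rw [hred] at h
    rw [hred'] at h'
    obtain ⟨htot, hanti⟩ := ih ((etil i)^[ε i b] b) htB ((etil i)^[ε i b'] b') htB' h h'
    have hit : (⇑(e i))^[ε i b] b = qFact (s i) (ε i b) • (etil i)^[ε i b] b := by
      rw [← Module.End.pow_apply, hpow]
    have hit' : (⇑(e i))^[ε i b'] b' = qFact (s i) (ε i b') • (etil i)^[ε i b'] b' := by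
      rw [← Module.End.pow_apply, hpow']
    constructor
    · rcases lt_trichotomy (ε i b) (ε i b') with hlt | heq | hgt
      · exact Or.inl (Or.inl hlt)
      · rcases htot with hp | hp
        · refine Or.inl (Or.inr ⟨heq, ?_⟩)
          rw [hit, hit']
          exact (my_precRel_smul e ε hε1 hε2 l _ _ _ _ hfact hfact').2 hp
        · refine Or.inr (Or.inr ⟨heq.symm, ?_⟩)
          rw [hit, hit']
          exact (my_precRel_smul e ε hε1 hε2 l _ _ _ _ hfact' hfact).2 hp
      · exact Or.inr (Or.inl hgt)
    · rintro (h1 | ⟨heq, h1⟩) (h2 | ⟨heq2, h2⟩)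
      · omega
      · omega
      · omega
      · rw [hit, hit'] at h1 h2
        have e1 := (my_precRel_smul e ε hε1 hε2 l _ _ _ _ hfact hfact').1 h1
        have e2 := (my_precRel_smul e ε hε1 hε2 l _ _ _ _ hfact' hfact).1 h2
        have heq3 := hanti e1 e2
        rw [← heq] at heq3
        exact keyB i (ε i b) b hb b' hb' rfl heq.symm heq3
end

section
/- In the nil-Hecke-type superalgebra R(nα_i), the elements b_k := τ_k x_{k+1} (1 ≤ k < n) satisfy the braid relations: b_r b_s = b_s b_r if |r − s| > 1, and b_r b_{r+1} b_r = b_{r+1} b_r b_{r+1} for 1 ≤ r < n−1. -/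
private lemma flipE {R : Type*} [Ring R] (E a b : R) (hE : E * E = 1)
    (h : a * b = E * (b * a)) : b * a = E * (a * b) := by
  rw [h, ← mul_assoc, hE, one_mul]

private lemma distant_aux {R : Type*} [Ring R] (E t1 t2 y1 y2 : R)
    (hE : E * E = 1) (hc : ∀ z : R, E * z = z * E)
    (h1 : y1 * t2 = E * (t2 * y1))
    (h2 : t1 * t2 = E * (t2 * t1))
    (h3 : y1 * y2 = E * (y2 * y1))
    (h4 : t1 * y2 = E * (y2 * t1)) :
    (t1 * y1) * (t2 * y2) = (t2 * y2) * (t1 * y1) := by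
  have hE' : ∀ z : R, E * (E * z) = z := fun z => by rw [← mul_assoc, hE, one_mul]
  have c1 : ∀ z : R, t1 * (E * z) = E * (t1 * z) := fun z => by
    rw [← mul_assoc, ← hc, mul_assoc]
  have c2 : ∀ z : R, t2 * (E * z) = E * (t2 * z) := fun z => by
    rw [← mul_assoc, ← hc, mul_assoc]
  have c3 : ∀ z : R, y1 * (E * z) = E * (y1 * z) := fun z => by
    rw [← mul_assoc, ← hc, mul_assoc]
  have c4 : ∀ z : R, y2 * (E * z) = E * (y2 * z) := fun z => by
    rw [← mul_assoc, ← hc, mul_assoc]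
  have h1' : ∀ z : R, y1 * (t2 * z) = E * (t2 * (y1 * z)) := fun z => by
    rw [← mul_assoc, h1, mul_assoc, mul_assoc]
  have h2' : ∀ z : R, t1 * (t2 * z) = E * (t2 * (t1 * z)) := fun z => by
    rw [← mul_assoc, h2, mul_assoc, mul_assoc]
  have h3' : ∀ z : R, y1 * (y2 * z) = E * (y2 * (y1 * z)) := fun z => by
    rw [← mul_assoc, h3, mul_assoc, mul_assoc]
  have h4' : ∀ z : R, t1 * (y2 * z) = E * (y2 * (t1 * z)) := fun z => by
    rw [← mul_assoc, h4, mul_assoc, mul_assoc]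
  simp only [mul_assoc]
  simp only [h1', h2', h3', h4', h1, h2, h3, h4, c1, c2, c3, c4, hE', hE]

private lemma braid_aux {R : Type*} [Ring R] (E t1 t2 y2 y3 : R)
    (hE : E * E = 1) (hc : ∀ z : R, E * z = z * E)
    (A1 : y2 * t2 = E * (t2 * y3) - E)
    (A2 : y3 * t1 = E * (t1 * y3))
    (A3 : y3 * t2 = E * (t2 * y2) + 1)
    (A5 : y3 * y2 = E * (y2 * y3))
    (hT1 : t1 * t1 = 0)
    (hbr : t2 * t1 * t2 = t1 * t2 * t1) :
    (t1 * y2) * (t2 * y3) * (t1 * y2) = (t2 * y3) * (t1 * y2) * (t2 * y3) := by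
  have hE' : ∀ z : R, E * (E * z) = z := fun z => by rw [← mul_assoc, hE, one_mul]
  have c1 : ∀ z : R, t1 * (E * z) = E * (t1 * z) := fun z => by
    rw [← mul_assoc, ← hc, mul_assoc]
  have c2 : ∀ z : R, t2 * (E * z) = E * (t2 * z) := fun z => by
    rw [← mul_assoc, ← hc, mul_assoc]
  have c3 : ∀ z : R, y2 * (E * z) = E * (y2 * z) := fun z => by
    rw [← mul_assoc, ← hc, mul_assoc]
  have c4 : ∀ z : R, y3 * (E * z) = E * (y3 * z) := fun z => by
    rw [← mul_assoc, ← hc, mul_assoc]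
  have cb1 : t1 * E = E * t1 := (hc t1).symm
  have cb2 : t2 * E = E * t2 := (hc t2).symm
  have cb3 : y2 * E = E * y2 := (hc y2).symm
  have cb4 : y3 * E = E * y3 := (hc y3).symm
  have A1' : ∀ z : R, y2 * (t2 * z) = E * (t2 * (y3 * z)) - E * z := fun z => by
    rw [← mul_assoc, A1, sub_mul, mul_assoc, mul_assoc]
  have A2' : ∀ z : R, y3 * (t1 * z) = E * (t1 * (y3 * z)) := fun z => by
    rw [← mul_assoc, A2, mul_assoc, mul_assoc]
  have A3' : ∀ z : R, y3 * (t2 * z) = E * (t2 * (y2 * z)) + z := fun z => by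
    rw [← mul_assoc, A3, add_mul, one_mul, mul_assoc, mul_assoc]
  have A5' : ∀ z : R, y3 * (y2 * z) = E * (y2 * (y3 * z)) := fun z => by
    rw [← mul_assoc, A5, mul_assoc, mul_assoc]
  have hT1' : ∀ z : R, t1 * (t1 * z) = 0 := fun z => by
    rw [← mul_assoc, hT1, zero_mul]
  have hbr' : ∀ z : R, t2 * (t1 * (t2 * z)) = t1 * (t2 * (t1 * z)) := fun z => by
    simp only [← mul_assoc]; rw [hbr]
  have hbrb : t2 * (t1 * t2) = t1 * (t2 * t1) := by
    simp only [← mul_assoc]; rw [hbr]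
  simp only [mul_assoc]
  simp only [A1', A2', A3', A5', A1, A2, A3, A5, hT1', hT1, hbr', hbrb,
    c1, c2, c3, c4, cb1, cb2, cb3, cb4, hE', hE,
    mul_sub, sub_mul, mul_add, add_mul, mul_one, one_mul, mul_zero, zero_mul,
    sub_zero, zero_sub, add_zero, zero_add]
  noncomm_ring

/-- In the nil-Hecke-type (one-color) quiver Hecke superalgebra `R(nα_i)`
(any ring containing elements `x_1,…,x_n`, `τ_1,…,τ_{n−1}` satisfying the one-color defining
relations, with `Q_{ii} = 0` so that `τ_a² = 0`), the elements `b_k := τ_k x_{k+1}` (`1 ≤ k < n`)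
satisfy the braid relations: `b_r b_s = b_s b_r` if `|r − s| > 1`, and
`b_r b_{r+1} b_r = b_{r+1} b_r b_{r+1}` for `1 ≤ r < n−1`. -/
theorem stmt_6 {R : Type*} [Ring R] (n : ℕ) (pi : ℕ) (hpi : pi ≤ 1)
    (x τ : ℕ → R)
    -- supercommutation of the x's
    (hxx : ∀ p q, 1 ≤ p → p ≤ n → 1 ≤ q → q ≤ n → p ≠ q →
      x p * x q = (-1 : R) ^ pi * (x q * x p))
    -- τ_a² = Q_{ii}(x_a, x_{a+1}) = 0
    (hττ : ∀ a, 1 ≤ a → a < n → τ a * τ a = 0)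
    -- τ_a x_p = (−1)^{p(i)} x_p τ_a for p ≠ a, a+1
    (hτx : ∀ a p, 1 ≤ a → a < n → 1 ≤ p → p ≤ n → p ≠ a → p ≠ a + 1 →
      τ a * x p = (-1 : R) ^ pi * (x p * τ a))
    -- mixed relations: τ_a x_{a+1} − (−1)^{p(i)} x_a τ_a = x_{a+1} τ_a − (−1)^{p(i)} τ_a x_a = 1
    (hmix1 : ∀ a, 1 ≤ a → a < n →
      τ a * x (a + 1) - (-1 : R) ^ pi * (x a * τ a) = 1)
    (hmix2 : ∀ a, 1 ≤ a → a < n →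
      x (a + 1) * τ a - (-1 : R) ^ pi * (τ a * x a) = 1)
    -- distant supercommutation of τ's
    (hdist : ∀ a b, 1 ≤ a → a < n → 1 ≤ b → b < n → (a + 1 < b ∨ b + 1 < a) →
      τ a * τ b = (-1 : R) ^ pi * (τ b * τ a))
    -- braid relation
    (hbraid : ∀ a, 1 ≤ a → a + 1 < n →
      τ (a + 1) * τ a * τ (a + 1) = τ a * τ (a + 1) * τ a) :
    (∀ r s, 1 ≤ r → r < n → 1 ≤ s → s < n → (r + 1 < s ∨ s + 1 < r) →
      (τ r * x (r + 1)) * (τ s * x (s + 1)) = (τ s * x (s + 1)) * (τ r * x (r + 1)))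
    ∧ (∀ r, 1 ≤ r → r + 1 < n →
      (τ r * x (r + 1)) * (τ (r + 1) * x (r + 2)) * (τ r * x (r + 1))
        = (τ (r + 1) * x (r + 2)) * (τ r * x (r + 1)) * (τ (r + 1) * x (r + 2))) := by
  set E : R := (-1 : R) ^ pi with hEdef
  have hE : E * E = 1 := by
    rw [hEdef, ← pow_add, ← two_mul, pow_mul]; norm_num
  have hc : ∀ z : R, E * z = z * E := fun z =>
    ((Commute.neg_one_left z).pow_left pi).eq
  have key : ∀ r s, 1 ≤ r → r < n → s < n → r + 1 < s →
      (τ r * x (r + 1)) * (τ s * x (s + 1)) = (τ s * x (s + 1)) * (τ r * x (r + 1)) := by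
    intro r s hr1 hrn hsn hrs
    exact distant_aux E (τ r) (τ s) (x (r + 1)) (x (s + 1)) hE hc
      (flipE E (τ s) (x (r + 1)) hE
        (hτx s (r + 1) (by omega) hsn (by omega) (by omega) (by omega) (by omega)))
      (hdist r s hr1 hrn (by omega) hsn (Or.inl hrs))
      (hxx (r + 1) (s + 1) (by omega) (by omega) (by omega) (by omega) (by omega))
      (hτx r (s + 1) hr1 hrn (by omega) (by omega) (by omega) (by omega))
  constructor
  · intro r s hr1 hrn hs1 hsn h
    rcases h with h | h
    · exact key r s hr1 hrn hsn h
    · exact (key s r hs1 hsn hrn h).symm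
  · intro r hr1 hrn
    have e21 : r + 2 = r + 1 + 1 := by omega
    have A1 : x (r + 1) * τ (r + 1) = E * (τ (r + 1) * x (r + 2)) - E := by
      have h := hmix1 (r + 1) (by omega) hrn
      rw [← e21] at h
      have h' : τ (r + 1) * x (r + 2) = 1 + E * (x (r + 1) * τ (r + 1)) :=
        sub_eq_iff_eq_add.mp h
      calc x (r + 1) * τ (r + 1)
          = E * (E * (x (r + 1) * τ (r + 1))) := by rw [← mul_assoc, hE, one_mul]
        _ = E * (τ (r + 1) * x (r + 2)) - E := by rw [h', mul_add, mul_one]; abel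
    have A2 : x (r + 2) * τ r = E * (τ r * x (r + 2)) :=
      flipE E (τ r) (x (r + 2)) hE
        (hτx r (r + 2) hr1 (by omega) (by omega) (by omega) (by omega) (by omega))
    have A3 : x (r + 2) * τ (r + 1) = E * (τ (r + 1) * x (r + 1)) + 1 := by
      have h := hmix2 (r + 1) (by omega) hrn
      rw [← e21] at h
      exact (sub_eq_iff_eq_add.mp h).trans (add_comm 1 _)
    have A5 : x (r + 2) * x (r + 1) = E * (x (r + 1) * x (r + 2)) :=
      hxx (r + 2) (r + 1) (by omega) (by omega) (by omega) (by omega) (by omega)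
    exact braid_aux E (τ r) (τ (r + 1)) (x (r + 1)) (x (r + 2)) hE hc
      A1 A2 A3 A5 (hττ r hr1 (by omega)) (hbraid r hr1 hrn)
end

section
/- Let w[1,n] denote the longest element of the symmetric group S_n and τ_{w[1,n]} the corresponding product of τ-generators in R(nα_i). Then the two-sided ideal generated by τ_{w[1,n]} is everything: R(nα_i) τ_{w[1,n]} R(nα_i) = R(nα_i). -/
/-- `τ_{w[1,n]}`, the product of `τ`-generators along the chosen reduced expression
`w[1,n] = w[1,n−1] · s_{n−1} s_{n−2} ⋯ s_1` of the longest element of `S_n`. -/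
def longTau {R : Type*} [Ring R] (τ : ℕ → R) : ℕ → R
  | 0 => 1
  | m + 1 => longTau τ m * ((List.range m).reverse.map (fun j => τ (j + 1))).prod

namespace Stmt7Aux

variable {R : Type*} [Ring R]

/-- `W m = τ_m τ_{m-1} ⋯ τ_1`. -/
def Wf (τ : ℕ → R) : ℕ → R
  | 0 => 1
  | m + 1 => τ (m + 1) * Wf τ m

/-- `Q j len = W_j W_{j+1} ⋯ W_{j+len-1}`. -/
def Qf (τ : ℕ → R) : ℕ → ℕ → R
  | _, 0 => 1
  | j, l + 1 => Wf τ j * Qf τ (j + 1) l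

/-- `P a b = W_a W_{a+1} ⋯ W_b` (equal to `1` if `b < a`). -/
def Pf (τ : ℕ → R) (a b : ℕ) : R := Qf τ a (b + 1 - a)

lemma Wf_list (τ : ℕ → R) : ∀ m, ((List.range m).reverse.map (fun j => τ (j + 1))).prod = Wf τ m
  | 0 => by simp [Wf]
  | m + 1 => by
    simp only [List.range_succ, List.reverse_append, List.reverse_singleton,
      List.singleton_append, List.map_cons, List.prod_cons, Wf_list τ m]
    rfl

lemma Qf_succ (τ : ℕ → R) : ∀ l j, Qf τ j (l + 1) = Qf τ j l * Wf τ (j + l)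
  | 0, j => by simp [Qf]
  | l + 1, j => by
    show Wf τ j * Qf τ (j + 1) (l + 1) = Wf τ j * Qf τ (j + 1) l * Wf τ (j + (l + 1))
    rw [Qf_succ τ l (j + 1), ← mul_assoc]
    congr 2
    omega

lemma Pf_append (τ : ℕ → R) {a b : ℕ} (h : a ≤ b + 1) :
    Pf τ a (b + 1) = Pf τ a b * Wf τ (b + 1) := by
  unfold Pf
  have h1 : b + 1 + 1 - a = (b + 1 - a) + 1 := by omega
  rw [h1, Qf_succ]
  have h2 : a + (b + 1 - a) = b + 1 := by omega
  rw [h2]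

lemma Pf_nil (τ : ℕ → R) {a b : ℕ} (h : b + 1 ≤ a) : Pf τ a b = 1 := by
  unfold Pf
  have : b + 1 - a = 0 := by omega
  rw [this]
  rfl

lemma Pf_single (τ : ℕ → R) (a : ℕ) : Pf τ a a = Wf τ a := by
  unfold Pf
  have : a + 1 - a = 1 := by omega
  rw [this]
  simp [Qf]

lemma longTau_eq (τ : ℕ → R) : ∀ m, longTau τ (m + 1) = Pf τ 1 m
  | 0 => by
    show longTau τ 0 * _ = _
    rw [Pf_nil τ (by omega)]
    simp [longTau]
  | m + 1 => by
    show longTau τ (m + 1) * _ = _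
    rw [Wf_list, longTau_eq τ m, ← Pf_append τ (by omega)]

lemma sgn_mul {e f : ℤ} (he : e = 1 ∨ e = -1) (hf : f = 1 ∨ f = -1) :
    e * f = 1 ∨ e * f = -1 := by
  rcases he with rfl | rfl <;> rcases hf with rfl | rfl <;> simp

lemma sgn_smul_smul {e : ℤ} (he : e = 1 ∨ e = -1) (r : R) : e • e • r = r := by
  rcases he with rfl | rfl <;> simp

lemma cast_mul_left_comm (e f : ℤ) (r : R) :
    (e : R) * ((f : R) * r) = (f : R) * ((e : R) * r) := by
  rw [← mul_assoc, ← mul_assoc, ← Int.cast_mul, ← Int.cast_mul, mul_comm e f]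

lemma cast_mul_comm (e : ℤ) (r s : R) : r * ((e : R) * s) = (e : R) * (r * s) := by
  rw [← mul_assoc, ← (Int.cast_commute e r).eq, mul_assoc]

section Rels

variable (τ x : ℕ → R) (σ : ℤ) (n : ℕ)

lemma L_W_x (hσ : σ = 1 ∨ σ = -1)
    (hτx : ∀ a p, 1 ≤ a → a < n → 1 ≤ p → p ≤ n → p ≠ a → p ≠ a + 1 →
      τ a * x p = σ • (x p * τ a)) :
    ∀ m p, m + 2 ≤ p → p ≤ n →
      ∃ e : ℤ, (e = 1 ∨ e = -1) ∧ Wf τ m * x p = e • (x p * Wf τ m) := by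
  intro m
  induction m with
  | zero => exact fun p _ _ => ⟨1, Or.inl rfl, by simp [Wf]⟩
  | succ m ih =>
    intro p hp1 hp2
    obtain ⟨e, he, hw⟩ := ih p (by omega) hp2
    have h1 : τ (m + 1) * x p = σ • (x p * τ (m + 1)) :=
      hτx (m + 1) p (by omega) (by omega) (by omega) hp2 (by omega) (by omega)
    refine ⟨σ * e, sgn_mul hσ he, ?_⟩
    calc Wf τ (m + 1) * x p = τ (m + 1) * (Wf τ m * x p) := by simp [Wf, mul_assoc]
      _ = τ (m + 1) * (e • (x p * Wf τ m)) := by rw [hw]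
      _ = e • (τ (m + 1) * x p * Wf τ m) := by
          rw [mul_smul_comm, mul_assoc]
      _ = e • ((σ • (x p * τ (m + 1))) * Wf τ m) := by rw [h1]
      _ = (σ * e) • (x p * Wf τ (m + 1)) := by
          simp only [smul_mul_assoc, smul_smul, mul_comm e σ, mul_assoc, Wf]

lemma L_W_tau (hσ : σ = 1 ∨ σ = -1)
    (hdist : ∀ a b, 1 ≤ a → a < n → 1 ≤ b → b < n → (a + 1 < b ∨ b + 1 < a) →
      τ a * τ b = σ • (τ b * τ a)) :
    ∀ m b, m + 2 ≤ b → b < n →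
      ∃ e : ℤ, (e = 1 ∨ e = -1) ∧ Wf τ m * τ b = e • (τ b * Wf τ m) := by
  intro m
  induction m with
  | zero => exact fun b _ _ => ⟨1, Or.inl rfl, by simp [Wf]⟩
  | succ m ih =>
    intro b hb1 hb2
    obtain ⟨e, he, hw⟩ := ih b (by omega) hb2
    have h1 : τ (m + 1) * τ b = σ • (τ b * τ (m + 1)) :=
      hdist (m + 1) b (by omega) (by omega) (by omega) hb2 (by omega)
    refine ⟨σ * e, sgn_mul hσ he, ?_⟩
    calc Wf τ (m + 1) * τ b = τ (m + 1) * (Wf τ m * τ b) := by simp [Wf, mul_assoc]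
      _ = τ (m + 1) * (e • (τ b * Wf τ m)) := by rw [hw]
      _ = e • (τ (m + 1) * τ b * Wf τ m) := by
          rw [mul_smul_comm, mul_assoc]
      _ = e • ((σ • (τ b * τ (m + 1))) * Wf τ m) := by rw [h1]
      _ = (σ * e) • (τ b * Wf τ (m + 1)) := by
          simp only [smul_mul_assoc, smul_smul, mul_comm e σ, mul_assoc, Wf]

lemma L_Wsq (hσ : σ = 1 ∨ σ = -1)
    (hττ : ∀ a, 1 ≤ a → a < n → τ a * τ a = 0)
    (hdist : ∀ a b, 1 ≤ a → a < n → 1 ≤ b → b < n → (a + 1 < b ∨ b + 1 < a) →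
      τ a * τ b = σ • (τ b * τ a))
    (hbraid : ∀ a, 1 ≤ a → a + 1 < n →
      τ (a + 1) * τ a * τ (a + 1) = τ a * τ (a + 1) * τ a) :
    ∀ m, 1 ≤ m → m < n → Wf τ m * Wf τ m = 0 := by
  intro m
  induction m with
  | zero => intro h _; exact absurd h (by norm_num)
  | succ m ih =>
    intro _ hmn
    cases m with
    | zero => simpa [Wf] using hττ 1 (by omega) (by omega)
    | succ k =>
      have ihk := ih (by omega) (by omega)
      obtain ⟨e, he, hcm⟩ := L_W_tau τ σ n hσ hdist k (k + 2) (by omega) (by omega)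
      have hb : τ (k + 2) * τ (k + 1) * τ (k + 2) = τ (k + 1) * τ (k + 2) * τ (k + 1) :=
        hbraid (k + 1) (by omega) (by omega)
      calc Wf τ (k + 2) * Wf τ (k + 2)
          = τ (k + 2) * τ (k + 1) * ((Wf τ k * τ (k + 2)) * Wf τ (k + 1)) := by
            simp [Wf, mul_assoc]
        _ = e • (τ (k + 2) * τ (k + 1) * τ (k + 2) * (Wf τ k * Wf τ (k + 1))) := by
            rw [hcm]
            simp only [mul_smul_comm, smul_mul_assoc, mul_assoc]
        _ = e • (τ (k + 1) * τ (k + 2) * τ (k + 1) * (Wf τ k * Wf τ (k + 1))) := by rw [hb]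
        _ = e • (τ (k + 1) * τ (k + 2) * (Wf τ (k + 1) * Wf τ (k + 1))) := by
            simp [Wf, mul_assoc]
        _ = 0 := by rw [ihk]; simp

lemma L_Y (hσ : σ = 1 ∨ σ = -1)
    (hτx : ∀ a p, 1 ≤ a → a < n → 1 ≤ p → p ≤ n → p ≠ a → p ≠ a + 1 →
      τ a * x p = σ • (x p * τ a))
    (hmix1 : ∀ a, 1 ≤ a → a < n → τ a * x (a + 1) = 1 + σ • (x a * τ a)) :
    ∀ m, 1 ≤ m → m < n →
      ∃ e f : ℤ, (e = 1 ∨ e = -1) ∧ (f = 1 ∨ f = -1) ∧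
        Wf τ m * x (m + 1) = e • Wf τ (m - 1) + f • (x m * Wf τ m) := by
  intro m h1 h2
  cases m with
  | zero => exact absurd h1 (by norm_num)
  | succ k =>
    obtain ⟨e, he, hw⟩ := L_W_x τ x σ n hσ hτx k (k + 2) (by omega) (by omega)
    have hm : τ (k + 1) * x (k + 2) = 1 + σ • (x (k + 1) * τ (k + 1)) :=
      hmix1 (k + 1) (by omega) h2
    refine ⟨e, e * σ, he, sgn_mul he hσ, ?_⟩
    have hstep : k + 1 - 1 = k := rfl
    rw [hstep]
    calc Wf τ (k + 1) * x (k + 2) = τ (k + 1) * (Wf τ k * x (k + 2)) := by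
          simp [Wf, mul_assoc]
      _ = e • (τ (k + 1) * x (k + 2) * Wf τ k) := by
          rw [hw, mul_smul_comm, mul_assoc]
      _ = e • ((1 + σ • (x (k + 1) * τ (k + 1))) * Wf τ k) := by rw [hm]
      _ = e • Wf τ k + (e * σ) • (x (k + 1) * Wf τ (k + 1)) := by
          simp [add_mul, smul_add, smul_mul_assoc, smul_smul, Wf, mul_assoc]

lemma L_X (hσ : σ = 1 ∨ σ = -1)
    (hττ : ∀ a, 1 ≤ a → a < n → τ a * τ a = 0)
    (hτx : ∀ a p, 1 ≤ a → a < n → 1 ≤ p → p ≤ n → p ≠ a → p ≠ a + 1 →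
      τ a * x p = σ • (x p * τ a))
    (hmix1 : ∀ a, 1 ≤ a → a < n → τ a * x (a + 1) = 1 + σ • (x a * τ a))
    (hdist : ∀ a b, 1 ≤ a → a < n → 1 ≤ b → b < n → (a + 1 < b ∨ b + 1 < a) →
      τ a * τ b = σ • (τ b * τ a))
    (hbraid : ∀ a, 1 ≤ a → a + 1 < n →
      τ (a + 1) * τ a * τ (a + 1) = τ a * τ (a + 1) * τ a) :
    ∀ m j, 1 ≤ j → j ≤ m → m < n →
      ∃ e f : ℤ, (e = 1 ∨ e = -1) ∧ (f = 1 ∨ f = -1) ∧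
        Pf τ j m * x (m + 1) =
          e • (Wf τ (j - 1) * Pf τ (j + 1) m) + f • (x j * Pf τ j m) := by
  intro m
  induction m with
  | zero => intro j h1 h2 _; exact absurd (h1.trans h2) (by norm_num)
  | succ m ih =>
    intro j hj1 hj2 hmn
    rcases eq_or_lt_of_le hj2 with heq | hlt
    · -- base case : j = m + 1
      obtain ⟨e, f, he, hf, hY⟩ := L_Y τ x σ n hσ hτx hmix1 (m + 1) (by omega) hmn
      refine ⟨e, f, he, hf, ?_⟩
      rw [heq, Pf_single, Pf_nil τ (le_refl _), mul_one]
      exact hY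
    · -- inductive case : j ≤ m
      have hjm : j ≤ m := by omega
      obtain ⟨m', rfl⟩ : ∃ m', m = m' + 1 := ⟨m - 1, by omega⟩
      obtain ⟨e₂, f₂, he₂, hf₂, hX⟩ := ih j hj1 hjm (by omega)
      obtain ⟨e₁, f₁, he₁, hf₁, hY⟩ :=
        L_Y τ x σ n hσ hτx hmix1 (m' + 2) (by omega) hmn
      have hY' : Wf τ (m' + 2) * x (m' + 3) =
          e₁ • Wf τ (m' + 1) + f₁ • (x (m' + 2) * Wf τ (m' + 2)) := hY
      have hz : Pf τ j (m' + 1) * Wf τ (m' + 1) = 0 := by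
        rw [Pf_append τ (by omega : j ≤ m' + 1), mul_assoc,
          L_Wsq τ σ n hσ hττ hdist hbraid (m' + 1) (by omega) (by omega), mul_zero]
      have hP : Pf τ j (m' + 2) = Pf τ j (m' + 1) * Wf τ (m' + 2) :=
        Pf_append τ (by omega)
      have hP1 : Pf τ (j + 1) (m' + 2) = Pf τ (j + 1) (m' + 1) * Wf τ (m' + 2) :=
        Pf_append τ (by omega)
      refine ⟨f₁ * e₂, f₁ * f₂, sgn_mul hf₁ he₂, sgn_mul hf₁ hf₂, ?_⟩
      calc Pf τ j (m' + 2) * x (m' + 3)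
          = Pf τ j (m' + 1) * (Wf τ (m' + 2) * x (m' + 3)) := by rw [hP, mul_assoc]
        _ = Pf τ j (m' + 1) * (e₁ • Wf τ (m' + 1) + f₁ • (x (m' + 2) * Wf τ (m' + 2))) := by
            rw [hY']
        _ = e₁ • (Pf τ j (m' + 1) * Wf τ (m' + 1)) +
              f₁ • (Pf τ j (m' + 1) * x (m' + 2) * Wf τ (m' + 2)) := by
            simp only [mul_add, mul_smul_comm, mul_assoc]
        _ = f₁ • (Pf τ j (m' + 1) * x (m' + 2) * Wf τ (m' + 2)) := by
            rw [hz, smul_zero, zero_add]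
        _ = f₁ • ((e₂ • (Wf τ (j - 1) * Pf τ (j + 1) (m' + 1)) +
              f₂ • (x j * Pf τ j (m' + 1))) * Wf τ (m' + 2)) := by rw [hX]
        _ = (f₁ * e₂) • (Wf τ (j - 1) * Pf τ (j + 1) (m' + 2)) +
              (f₁ * f₂) • (x j * Pf τ j (m' + 2)) := by
            rw [hP1, hP]
            simp [add_mul, smul_add, smul_mul_assoc, smul_smul, mul_assoc]

lemma L_CommQ (hσ : σ = 1 ∨ σ = -1)
    (hτx : ∀ a p, 1 ≤ a → a < n → 1 ≤ p → p ≤ n → p ≠ a → p ≠ a + 1 →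
      τ a * x p = σ • (x p * τ a)) :
    ∀ len k p, (len = 0 ∨ k + len + 1 ≤ p) → p ≤ n →
      ∃ e : ℤ, (e = 1 ∨ e = -1) ∧ Qf τ k len * x p = e • (x p * Qf τ k len) := by
  intro len
  induction len with
  | zero => exact fun k p _ _ => ⟨1, Or.inl rfl, by simp [Qf]⟩
  | succ len ih =>
    intro k p hcond hp
    have hb : k + len + 2 ≤ p := by omega
    obtain ⟨e₁, he₁, h1⟩ := L_W_x τ x σ n hσ hτx k p (by omega) hp
    obtain ⟨e₂, he₂, h2⟩ := ih (k + 1) p (Or.inr (by omega)) hp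
    refine ⟨e₂ * e₁, sgn_mul he₂ he₁, ?_⟩
    calc Qf τ k (len + 1) * x p = Wf τ k * (Qf τ (k + 1) len * x p) := by
          simp [Qf, mul_assoc]
      _ = e₂ • ((Wf τ k * x p) * Qf τ (k + 1) len) := by
          rw [h2, mul_smul_comm, mul_assoc]
      _ = (e₂ * e₁) • (x p * Qf τ k (len + 1)) := by
          rw [h1]
          simp [smul_mul_assoc, smul_smul, Qf, mul_assoc]

lemma L_CommP (hσ : σ = 1 ∨ σ = -1)
    (hτx : ∀ a p, 1 ≤ a → a < n → 1 ≤ p → p ≤ n → p ≠ a → p ≠ a + 1 →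
      τ a * x p = σ • (x p * τ a))
    {a b p : ℕ} (h : b + 2 ≤ p ∨ b + 1 ≤ a) (hp : p ≤ n) :
    ∃ e : ℤ, (e = 1 ∨ e = -1) ∧ Pf τ a b * x p = e • (x p * Pf τ a b) := by
  unfold Pf
  exact L_CommQ τ x σ n hσ hτx (b + 1 - a) a p (by omega) hp

end Rels

end Stmt7Aux

open Stmt7Aux

/-- Let `w[1,n]` denote the longest element of the symmetric group `S_n` and
`τ_{w[1,n]}` the corresponding product of `τ`-generators in the one-color quiver Hecke
superalgebra `R(nα_i)` (over a base with `2` invertible).  Then the two-sided ideal generated by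
`τ_{w[1,n]}` is everything: `R(nα_i) τ_{w[1,n]} R(nα_i) = R(nα_i)`. -/
theorem stmt_7 {k : Type*} [CommRing k] (h2 : IsUnit (2 : k))
    {R : Type*} [Ring R] [Algebra k R]
    (n : ℕ) (pi : ℕ) (hpi : pi ≤ 1)
    (x τ : ℕ → R)
    (hxx : ∀ p q, 1 ≤ p → p ≤ n → 1 ≤ q → q ≤ n → p ≠ q →
      x p * x q = (-1 : R) ^ pi * (x q * x p))
    (hττ : ∀ a, 1 ≤ a → a < n → τ a * τ a = 0)
    (hτx : ∀ a p, 1 ≤ a → a < n → 1 ≤ p → p ≤ n → p ≠ a → p ≠ a + 1 →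
      τ a * x p = (-1 : R) ^ pi * (x p * τ a))
    (hmix1 : ∀ a, 1 ≤ a → a < n →
      τ a * x (a + 1) - (-1 : R) ^ pi * (x a * τ a) = 1)
    (hmix2 : ∀ a, 1 ≤ a → a < n →
      x (a + 1) * τ a - (-1 : R) ^ pi * (τ a * x a) = 1)
    (hdist : ∀ a b, 1 ≤ a → a < n → 1 ≤ b → b < n → (a + 1 < b ∨ b + 1 < a) →
      τ a * τ b = (-1 : R) ^ pi * (τ b * τ a))
    (hbraid : ∀ a, 1 ≤ a → a + 1 < n →
      τ (a + 1) * τ a * τ (a + 1) = τ a * τ (a + 1) * τ a) :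
    AddSubgroup.closure {z : R | ∃ u v : R, z = u * longTau τ n * v} = ⊤ := by
  set S : Set R := {z : R | ∃ u v : R, z = u * longTau τ n * v} with hSdef
  -- the closure is a two-sided ideal
  have hIl : ∀ (r z : R), z ∈ AddSubgroup.closure S → r * z ∈ AddSubgroup.closure S := by
    intro r z hz
    refine AddSubgroup.closure_induction ?_ ?_ ?_ ?_ hz
    · rintro w ⟨u, v, rfl⟩
      exact AddSubgroup.subset_closure ⟨r * u, v, by simp [mul_assoc]⟩
    · simpa using (AddSubgroup.closure S).zero_mem
    · intro a b _ _ ha hb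
      rw [mul_add]; exact add_mem ha hb
    · intro a _ ha
      rw [mul_neg]; exact neg_mem ha
  have hIr : ∀ (r z : R), z ∈ AddSubgroup.closure S → z * r ∈ AddSubgroup.closure S := by
    intro r z hz
    refine AddSubgroup.closure_induction ?_ ?_ ?_ ?_ hz
    · rintro w ⟨u, v, rfl⟩
      exact AddSubgroup.subset_closure ⟨u, v * r, by simp [mul_assoc]⟩
    · simpa using (AddSubgroup.closure S).zero_mem
    · intro a b _ _ ha hb
      rw [add_mul]; exact add_mem ha hb
    · intro a _ ha
      rw [neg_mul]; exact neg_mem ha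
  have hIz : ∀ (e : ℤ) (z : R), z ∈ AddSubgroup.closure S → e • z ∈ AddSubgroup.closure S :=
    fun e z h => AddSubgroup.zsmul_mem _ h e
  have hcancel : ∀ (e : ℤ), (e = 1 ∨ e = -1) → ∀ z : R,
      e • z ∈ AddSubgroup.closure S → z ∈ AddSubgroup.closure S := by
    intro e he z hz
    have := hIz e _ hz
    rwa [sgn_smul_smul he] at this
  -- it suffices to show that `1` lies in the closure
  suffices h1 : (1 : R) ∈ AddSubgroup.closure S by
    rw [eq_top_iff]
    intro r _
    simpa using hIl r 1 h1
  -- trivial small cases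
  rcases Nat.lt_or_ge n 2 with hn2 | hn2
  · have h1 : longTau τ n = 1 := by
      interval_cases n
      · rfl
      · show longTau τ 0 * _ = 1
        simp [longTau]
    exact AddSubgroup.subset_closure ⟨1, 1, by rw [h1]; simp⟩
  obtain ⟨N, rfl⟩ : ∃ N, n = N + 2 := ⟨n - 2, by omega⟩
  -- convert the sign into an integer scalar
  obtain ⟨σ, hσ, hcast⟩ : ∃ σ : ℤ, (σ = 1 ∨ σ = -1) ∧
      ∀ r : R, (-1 : R) ^ pi * r = σ • r := by
    rcases Nat.le_one_iff_eq_zero_or_eq_one.mp hpi with rfl | rfl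
    · exact ⟨1, Or.inl rfl, fun r => by simp⟩
    · exact ⟨-1, Or.inr rfl, fun r => by simp⟩
  have hτx' : ∀ a p, 1 ≤ a → a < N + 2 → 1 ≤ p → p ≤ N + 2 → p ≠ a → p ≠ a + 1 →
      τ a * x p = σ • (x p * τ a) := by
    intro a p h1 h2 h3 h4 h5 h6
    rw [hτx a p h1 h2 h3 h4 h5 h6, hcast]
  have hmix1' : ∀ a, 1 ≤ a → a < N + 2 → τ a * x (a + 1) = 1 + σ • (x a * τ a) := by
    intro a h1 h2
    have h := hmix1 a h1 h2
    rw [hcast] at h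
    exact eq_add_of_sub_eq h
  have hdist' : ∀ a b, 1 ≤ a → a < N + 2 → 1 ≤ b → b < N + 2 → (a + 1 < b ∨ b + 1 < a) →
      τ a * τ b = σ • (τ b * τ a) := by
    intro a b h1 h2 h3 h4 h5
    rw [hdist a b h1 h2 h3 h4 h5, hcast]
  -- the long element lies in the closure
  have hT : Pf τ 1 (N + 1) ∈ AddSubgroup.closure S := by
    have h : longTau τ (N + 2) = Pf τ 1 (N + 1) := longTau_eq τ (N + 1)
    exact AddSubgroup.subset_closure ⟨1, 1, by rw [← h]; simp⟩
  -- one cancellation step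
  have onestep : ∀ g m, g < m → m < N + 2 →
      Pf τ 1 (g - 1) * Pf τ (g + 1) m ∈ AddSubgroup.closure S →
      Pf τ 1 g * Pf τ (g + 2) m ∈ AddSubgroup.closure S := by
    intro g m hgm hmn hE
    obtain ⟨e, f, he, hf, hXe⟩ :=
      L_X τ x σ (N + 2) hσ hττ hτx' hmix1' hdist' hbraid m (g + 1) (by omega) (by omega) hmn
    have hXe' : Pf τ (g + 1) m * x (m + 1) =
        e • (Wf τ g * Pf τ (g + 2) m) + f • (x (g + 1) * Pf τ (g + 1) m) := hXe
    obtain ⟨e', he', hC⟩ := L_CommP τ x σ (N + 2) hσ hτx'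
      (a := 1) (b := g - 1) (p := g + 1) (by omega) (by omega)
    have h1 : Pf τ 1 (g - 1) * Pf τ (g + 1) m * x (m + 1) ∈ AddSubgroup.closure S :=
      hIr _ _ hE
    have hexp : Pf τ 1 (g - 1) * Pf τ (g + 1) m * x (m + 1)
        = e • (Pf τ 1 (g - 1) * (Wf τ g * Pf τ (g + 2) m))
          + (f * e') • (x (g + 1) * (Pf τ 1 (g - 1) * Pf τ (g + 1) m)) := by
      calc Pf τ 1 (g - 1) * Pf τ (g + 1) m * x (m + 1)
          = Pf τ 1 (g - 1) * (Pf τ (g + 1) m * x (m + 1)) := by rw [mul_assoc]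
        _ = Pf τ 1 (g - 1) *
            (e • (Wf τ g * Pf τ (g + 2) m) + f • (x (g + 1) * Pf τ (g + 1) m)) := by
            rw [hXe']
        _ = e • (Pf τ 1 (g - 1) * (Wf τ g * Pf τ (g + 2) m))
            + f • ((Pf τ 1 (g - 1) * x (g + 1)) * Pf τ (g + 1) m) := by
            simp only [mul_add, mul_smul_comm, mul_assoc]
        _ = e • (Pf τ 1 (g - 1) * (Wf τ g * Pf τ (g + 2) m))
            + (f * e') • (x (g + 1) * (Pf τ 1 (g - 1) * Pf τ (g + 1) m)) := by
            rw [hC]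
            simp only [smul_mul_assoc, smul_smul, mul_assoc]
    have h2 : e • (Pf τ 1 (g - 1) * (Wf τ g * Pf τ (g + 2) m)) ∈ AddSubgroup.closure S := by
      have h3 := sub_mem h1 (hIz (f * e') _ (hIl (x (g + 1)) _ hE))
      rw [hexp] at h3
      simpa using h3
    have h3 : Pf τ 1 (g - 1) * (Wf τ g * Pf τ (g + 2) m) ∈ AddSubgroup.closure S :=
      hcancel e he _ h2
    have hfold : Pf τ 1 (g - 1) * Wf τ g = Pf τ 1 g := by
      rcases Nat.eq_zero_or_pos g with rfl | hg
      · rw [Pf_nil τ (by omega)]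
        show (1 : R) * Wf τ 0 = Pf τ 1 0
        rw [Pf_nil τ (by omega)]
        simp [Wf]
      · have h4 : Pf τ 1 (g - 1 + 1) = Pf τ 1 (g - 1) * Wf τ (g - 1 + 1) := Pf_append τ (by omega)
        have h5 : g - 1 + 1 = g := by omega
        rw [h5] at h4
        exact h4.symm
    rw [← mul_assoc, hfold] at h3
    exact h3
  -- the main loop : shrink the window by one
  have loop : ∀ m, 1 ≤ m → m < N + 2 → Pf τ 1 m ∈ AddSubgroup.closure S →
      Pf τ 1 (m - 1) ∈ AddSubgroup.closure S := by
    intro m hm1 hm2 hPm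
    have inner : ∀ g, g ≤ m → Pf τ 1 (g - 1) * Pf τ (g + 1) m ∈ AddSubgroup.closure S := by
      intro g
      induction g with
      | zero =>
        intro _
        have h : Pf τ 1 (0 - 1) * Pf τ (0 + 1) m = Pf τ 1 m := by
          rw [Pf_nil τ (by omega), one_mul]
        rw [h]
        exact hPm
      | succ g ihg =>
        intro hg
        exact onestep g m (by omega) hm2 (ihg (by omega))
    have h := inner m (le_refl m)
    rwa [Pf_nil τ (a := m + 1) (b := m) (by omega), mul_one] at h
  -- descend from the long word down to `τ 1`
  have desc : ∀ d, d ≤ N → Pf τ 1 (N + 1 - d) ∈ AddSubgroup.closure S := by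
    intro d
    induction d with
    | zero => intro _; exact hT
    | succ d ihd =>
      intro hd
      have h := loop (N + 1 - d) (by omega) (by omega) (ihd (by omega))
      have harith : N + 1 - d - 1 = N + 1 - (d + 1) := by omega
      rwa [harith] at h
  have hτ1 : τ 1 ∈ AddSubgroup.closure S := by
    have h := desc N (le_refl N)
    have harith : N + 1 - N = 1 := by omega
    rw [harith] at h
    have hPf11 : Pf τ 1 1 = τ 1 := by
      rw [Pf_single]
      simp [Wf]
    rwa [hPf11] at h
  -- finally, `1 = τ 1 * x 2 - σ • (x 1 * τ 1)`
  have hone : (1 : R) = τ 1 * x 2 - σ • (x 1 * τ 1) := by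
    have h := hmix1' 1 (by omega) (by omega)
    rw [h]
    simp
  rw [hone]
  exact sub_mem (hIr (x 2) _ hτ1) (hIz σ _ (hIl (x 1) _ hτ1))
end

section
/- Suppose f e(ν) M = 0 for an R(n)-module M, f ∈ P_n, ν ∈ I^n, and 1 ≤ a < n with ν_a = ν_{a+1} = i. Then (∂_a f)(x_a − x_{a+1})^{p(i)} e(ν) M = 0, and (x_a² + x_{a+1}²)^{p(i)} (s̄_a f) e(ν) M = 0. -/
open Finset

/-- The generators of a quiver Hecke superalgebra on `n+1` strands inside a `k`-algebra `R`:
idempotents `e(ν)` (`ν ∈ I^{n+1}`), (super)polynomial generators `x_1,…,x_{n+1}` and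
intertwiners `τ_1,…,τ_n`, together with the parity function `pa` and the coefficients `t`
(supported in degrees `< D`) of the polynomials `Q_{ij}`. -/
structure QHS (k R I : Type*) [CommRing k] [Ring R] [Algebra k R] (n : ℕ) where
  pa : I → ℕ
  D : ℕ
  t : I → I → ℕ → ℕ → k
  e : (Fin (n + 1) → I) → R
  x : Fin (n + 1) → R
  τ : Fin n → R

namespace QHS

variable {k R I : Type*} [CommRing k] [Ring R] [Algebra k R] {n : ℕ}

/-- The transposition `s_a = (a, a+1)` acting on `{1, …, n+1}`. -/
def sw (a : Fin n) : Equiv.Perm (Fin (n + 1)) := Equiv.swap a.castSucc a.succ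

/-- The polynomial `Q_{ij}(u,v) = Σ_{r,s} t_{i,j;(r,s)} u^r v^s` (`0` if `i = j`). -/
def Qpol [DecidableEq I] (d : QHS k R I n) (i j : I) (u v : R) : R :=
  if i = j then 0 else
    ∑ r ∈ range d.D, ∑ s ∈ range d.D, d.t i j r s • (u ^ r * v ^ s)

/-- The defining relations (R1)–(R8) of the quiver Hecke superalgebra, together with the
standing conditions on the coefficients `t` of the `Q_{ij}`. -/
structure IsRep [Fintype I] [DecidableEq I] (d : QHS k R I n) : Prop where
  pa01 : ∀ i, d.pa i ≤ 1
  tsymm : ∀ i j r s, d.t i j r s = d.t j i s r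
  todd : ∀ i j r s, d.pa i = 1 → r % 2 = 1 → d.t i j r s = 0
  ortho : ∀ μ ν, d.e μ * d.e ν = if μ = ν then d.e ν else 0
  esum : ∑ ν : Fin (n + 1) → I, d.e ν = 1
  xx : ∀ (ν : Fin (n + 1) → I) (p q : Fin (n + 1)), p ≠ q →
    d.x p * d.x q * d.e ν
      = ((-1 : k) ^ (d.pa (ν p) * d.pa (ν q))) • (d.x q * d.x p * d.e ν)
  xe : ∀ (ν : Fin (n + 1) → I) (p : Fin (n + 1)), d.x p * d.e ν = d.e ν * d.x p
  τe : ∀ (ν : Fin (n + 1) → I) (a : Fin n),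
    d.τ a * d.e ν = d.e (fun p => ν (sw a p)) * d.τ a
  τx : ∀ (ν : Fin (n + 1) → I) (a : Fin n) (p : Fin (n + 1)),
    p ≠ a.castSucc → p ≠ a.succ →
    d.τ a * d.x p * d.e ν
      = ((-1 : k) ^ (d.pa (ν p) * (d.pa (ν a.castSucc) * d.pa (ν a.succ)))) •
          (d.x p * d.τ a * d.e ν)
  mixed1 : ∀ (ν : Fin (n + 1) → I) (a : Fin n),
    (d.τ a * d.x a.succ
        - ((-1 : k) ^ (d.pa (ν a.castSucc) * d.pa (ν a.succ))) • (d.x a.castSucc * d.τ a))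
      * d.e ν
      = if ν a.castSucc = ν a.succ then d.e ν else 0
  mixed2 : ∀ (ν : Fin (n + 1) → I) (a : Fin n),
    (d.x a.succ * d.τ a
        - ((-1 : k) ^ (d.pa (ν a.castSucc) * d.pa (ν a.succ))) • (d.τ a * d.x a.castSucc))
      * d.e ν
      = if ν a.castSucc = ν a.succ then d.e ν else 0
  τsq : ∀ (ν : Fin (n + 1) → I) (a : Fin n),
    d.τ a * d.τ a * d.e ν
      = d.Qpol (ν a.castSucc) (ν a.succ) (d.x a.castSucc) (d.x a.succ) * d.e ν
  ττ : ∀ (ν : Fin (n + 1) → I) (a b : Fin n),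
    (a : ℕ) + 1 < (b : ℕ) ∨ (b : ℕ) + 1 < (a : ℕ) →
    d.τ a * d.τ b * d.e ν
      = ((-1 : k) ^ (d.pa (ν a.castSucc) * d.pa (ν a.succ) *
            (d.pa (ν b.castSucc) * d.pa (ν b.succ)))) • (d.τ b * d.τ a * d.e ν)
  braid : ∀ (ν : Fin (n + 1) → I) (a b : Fin n), (b : ℕ) = (a : ℕ) + 1 →
    (d.τ b * d.τ a * d.τ b - d.τ a * d.τ b * d.τ a) * d.e ν
      = if ν a.castSucc = ν b.succ then
          (if d.pa (ν a.castSucc) = 0 then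
            (∑ r ∈ range d.D, ∑ s ∈ range d.D, d.t (ν a.castSucc) (ν a.succ) r s •
                ((∑ u ∈ range r, d.x b.succ ^ u * d.x a.castSucc ^ (r - 1 - u)) *
                  d.x a.succ ^ s)) * d.e ν
          else
            ((-1 : k) ^ d.pa (ν a.succ)) •
              ((d.x b.succ - d.x a.castSucc) *
                (∑ r ∈ range d.D, ∑ s ∈ range d.D, d.t (ν a.castSucc) (ν a.succ) r s •
                    ((∑ u ∈ range (r / 2),
                        d.x b.succ ^ (2 * u) * d.x a.castSucc ^ (r - 2 - 2 * u)) *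
                      d.x a.succ ^ s)) * d.e ν))
        else 0

end QHS

/-- Suppose `f e(ν) M = 0` for an `R(n)`-module `M`, where `f ∈ P_n` (the skew
polynomial subalgebra), `ν ∈ I^n` and `1 ≤ a < n` with `ν_a = ν_{a+1} = i`.  Then
`(∂_a f)(x_a − x_{a+1})^{p(i)} e(ν) M = 0` and `(x_a² + x_{a+1}²)^{p(i)} (s̄_a f) e(ν) M = 0`
(equivalently `(s̄_a f)(x_a² + x_{a+1}²)^{p(i)} e(ν) M = 0`).  Here `sf = s̄_a f` and
`df = ∂_a f` are characterized by `τ_a f = (s̄_a f) τ_a + ∂_a f` and by the divided-difference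
identity `(∂_a f)(x_{a+1}^{1+p(i)} − x_a^{1+p(i)}) e(ν)
 = ((x_{a+1} − x_a)^{p(i)} f − (s̄_a f)(x_{a+1} − x_a)^{p(i)}) e(ν)`. -/
theorem stmt_9 {k R I : Type*} [CommRing k] [Ring R] [Algebra k R]
    [Fintype I] [DecidableEq I] {n : ℕ} (h2 : IsUnit (2 : k))
    (d : QHS k R I n) (hd : d.IsRep)
    {M : Type*} [AddCommGroup M] [Module R M]
    (ν : Fin (n + 1) → I) (a : Fin n) (i : I)
    (hνa : ν a.castSucc = i) (hνa1 : ν a.succ = i)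
    (f sf df : R)
    -- f, s̄_a f, ∂_a f lie in the skew polynomial subalgebra P_n
    (hfP : f ∈ Algebra.adjoin k (Set.range d.x ∪ Set.range d.e))
    (hsfP : sf ∈ Algebra.adjoin k (Set.range d.x ∪ Set.range d.e))
    (hdfP : df ∈ Algebra.adjoin k (Set.range d.x ∪ Set.range d.e))
    -- τ_a f = (s̄_a f) τ_a + ∂_a f
    (hτf : d.τ a * f = sf * d.τ a + df)
    -- defining property of the super divided-difference operator ∂_a (on the e(ν)-component)
    (hdf : df * (d.x a.succ ^ (1 + d.pa i) - d.x a.castSucc ^ (1 + d.pa i)) * d.e ν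
      = ((d.x a.succ - d.x a.castSucc) ^ d.pa i * f
          - sf * (d.x a.succ - d.x a.castSucc) ^ d.pa i) * d.e ν)
    -- the even generators x^{1+p(i)} are central in P_n
    (hcent : ∀ p : Fin (n + 1),
      d.x p ^ (1 + d.pa i) * df = df * d.x p ^ (1 + d.pa i) ∧
      d.x p ^ (1 + d.pa i) * sf = sf * d.x p ^ (1 + d.pa i) ∧
      d.x p ^ (1 + d.pa i) * f = f * d.x p ^ (1 + d.pa i))
    -- the hypothesis: f e(ν) M = 0
    (hM : ∀ m : M, (f * d.e ν) • m = 0) :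
    (∀ m : M, (df * (d.x a.castSucc - d.x a.succ) ^ d.pa i * d.e ν) • m = 0)
    ∧ (∀ m : M, ((d.x a.castSucc ^ 2 + d.x a.succ ^ 2) ^ d.pa i * sf * d.e ν) • m = 0)
    ∧ (∀ m : M, (sf * (d.x a.castSucc ^ 2 + d.x a.succ ^ 2) ^ d.pa i * d.e ν) • m = 0) := by
  classical
  have hνsw : (fun p => ν (QHS.sw a p)) = ν := by
    funext p
    unfold QHS.sw
    rcases eq_or_ne p a.castSucc with h | h
    · subst h; rw [Equiv.swap_apply_left, hνa1, hνa]
    · rcases eq_or_ne p a.succ with h' | h'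
      · subst h'; rw [Equiv.swap_apply_right, hνa, hνa1]
      · rw [Equiv.swap_apply_of_ne_of_ne h h']
  have hτe : d.τ a * d.e ν = d.e ν * d.τ a := by
    rw [hd.τe ν a, hνsw]
  have hxe : ∀ p, d.x p * d.e ν = d.e ν * d.x p := fun p => hd.xe ν p
  have hττ : d.τ a * (d.τ a * d.e ν) = 0 := by
    rw [← mul_assoc, hd.τsq ν a, hνa, hνa1]
    simp [QHS.Qpol]
  have E1 : ∀ m : M, ((sf * d.τ a + df) * d.e ν) • m = 0 := by
    intro m
    have h : (sf * d.τ a + df) * d.e ν = d.τ a * (f * d.e ν) := by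
      rw [← hτf, mul_assoc]
    rw [h, mul_smul, hM, smul_zero]
  have E1' : ∀ m : M, (sf * (d.τ a * d.e ν)) • m + (df * d.e ν) • m = 0 := by
    intro m
    have h := E1 m
    rwa [add_mul, mul_assoc, add_smul] at h
  have e2 : ∀ m : M, (df * (d.τ a * d.e ν)) • m = 0 := by
    intro m
    have h := E1 (d.τ a • m)
    rw [← mul_smul] at h
    have hrw : (sf * d.τ a + df) * d.e ν * d.τ a = df * (d.τ a * d.e ν) := by
      simp only [add_mul, mul_assoc]
      rw [← hτe, hττ, mul_zero, zero_add]
    rwa [hrw] at h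
  rcases Nat.le_one_iff_eq_zero_or_eq_one.mp (hd.pa01 i) with hp | hp
  · -- EVEN CASE
    have hm2 := hd.mixed2 ν a
    rw [hνa, hνa1, hp, if_pos rfl] at hm2
    simp only [Nat.zero_mul, zero_mul, pow_zero, one_smul] at hm2
    rw [sub_mul, mul_assoc, mul_assoc] at hm2
    have hm2e : d.x a.succ * (d.τ a * d.e ν)
        = d.e ν + d.τ a * (d.x a.castSucc * d.e ν) := sub_eq_iff_eq_add.mp hm2
    have hcd : ∀ p, d.x p * df = df * d.x p := by
      intro p; have h := (hcent p).1; rw [hp] at h; simpa using h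
    have hcs : ∀ p, d.x p * sf = sf * d.x p := by
      intro p; have h := (hcent p).2.1; rw [hp] at h; simpa using h
    have step : ∀ w : R, d.x a.succ * w = w * d.x a.succ →
        (∀ m : M, (w * (d.τ a * d.e ν)) • m = 0) → ∀ m : M, (w * d.e ν) • m = 0 := by
      intro w hw hTw m
      have h0 : (d.x a.succ * (w * (d.τ a * d.e ν))) • m = 0 := by
        rw [mul_smul, hTw, smul_zero]
      have hrw : d.x a.succ * (w * (d.τ a * d.e ν))
          = w * d.e ν + w * (d.τ a * d.e ν) * d.x a.castSucc := by
        rw [← mul_assoc, hw, mul_assoc, hm2e, mul_add, hxe a.castSucc,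
          ← mul_assoc (d.τ a), ← mul_assoc w]
      have h1 : (w * (d.τ a * d.e ν) * d.x a.castSucc) • m = 0 := by
        rw [mul_smul]; exact hTw _
      rw [hrw, add_smul, h1, add_zero] at h0
      exact h0
    have e3 : ∀ m : M, (df * d.e ν) • m = 0 := step df (hcd a.succ) e2
    have e4 : ∀ m : M, (sf * (d.τ a * d.e ν)) • m = 0 := by
      intro m
      have h := E1' m
      rwa [e3 m, add_zero] at h
    have e5 : ∀ m : M, (sf * d.e ν) • m = 0 := step sf (hcs a.succ) e4
    refine ⟨?_, ?_, ?_⟩ <;> intro m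
    · rw [hp, pow_zero, mul_one]; exact e3 m
    · rw [hp, pow_zero, one_mul]; exact e5 m
    · rw [hp, pow_zero, mul_one]; exact e5 m
  · -- ODD CASE
    have hm1 := hd.mixed1 ν a
    rw [hνa, hνa1, hp, if_pos rfl] at hm1
    simp only [mul_one, one_mul, pow_one, neg_one_smul, sub_neg_eq_add] at hm1
    rw [add_mul, mul_assoc, mul_assoc] at hm1
    have hm1o : d.τ a * (d.x a.succ * d.e ν)
        = d.e ν - d.x a.castSucc * (d.τ a * d.e ν) := eq_sub_of_add_eq hm1
    have hm2 := hd.mixed2 ν a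
    rw [hνa, hνa1, hp, if_pos rfl] at hm2
    simp only [mul_one, one_mul, pow_one, neg_one_smul, sub_neg_eq_add] at hm2
    rw [add_mul, mul_assoc, mul_assoc] at hm2
    have hm2o : d.x a.succ * (d.τ a * d.e ν)
        = d.e ν - d.τ a * (d.x a.castSucc * d.e ν) := eq_sub_of_add_eq hm2
    have hm2o' : d.τ a * (d.x a.castSucc * d.e ν)
        = d.e ν - d.x a.succ * (d.τ a * d.e ν) := by
      rw [add_comm] at hm2
      exact eq_sub_of_add_eq hm2
    have hne : a.castSucc ≠ a.succ := (Fin.castSucc_lt_succ (i := a)).ne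
    have hxx := hd.xx ν a.castSucc a.succ hne
    rw [hνa, hνa1, hp] at hxx
    simp only [mul_one, one_mul, pow_one, neg_one_smul] at hxx
    rw [mul_assoc, mul_assoc] at hxx
    have hcd2 : ∀ p, d.x p ^ 2 * df = df * d.x p ^ 2 := by
      intro p; have h := (hcent p).1; rw [hp] at h; norm_num at h; exact h
    have hcs2 : ∀ p, d.x p ^ 2 * sf = sf * d.x p ^ 2 := by
      intro p; have h := (hcent p).2.1; rw [hp] at h; norm_num at h; exact h
    have hxe2 : ∀ p, d.x p ^ 2 * d.e ν = d.e ν * d.x p ^ 2 := by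
      intro p
      rw [pow_two, mul_assoc, hxe p, ← mul_assoc, hxe p, mul_assoc]
    have hEg : d.e ν * (d.x a.succ - d.x a.castSucc)
        = (d.x a.succ - d.x a.castSucc) * d.e ν := by
      rw [mul_sub, sub_mul, hxe, hxe]
    have K1 : d.x a.succ ^ 2 * (d.τ a * d.e ν)
        = (d.x a.succ - d.x a.castSucc) * d.e ν
          + d.τ a * (d.x a.castSucc ^ 2 * d.e ν) := by
      have h1 : d.τ a * (d.x a.castSucc * d.e ν) = d.τ a * d.e ν * d.x a.castSucc := by
        rw [hxe, ← mul_assoc]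
      calc d.x a.succ ^ 2 * (d.τ a * d.e ν)
          = d.x a.succ * (d.x a.succ * (d.τ a * d.e ν)) := by rw [pow_two, mul_assoc]
        _ = d.x a.succ * d.e ν - d.x a.succ * (d.τ a * d.e ν) * d.x a.castSucc := by
            conv_lhs => rw [hm2o, mul_sub, h1, ← mul_assoc]
        _ = d.x a.succ * d.e ν
              - (d.e ν - d.τ a * (d.x a.castSucc * d.e ν)) * d.x a.castSucc := by
            conv_lhs => rw [hm2o]
        _ = d.x a.succ * d.e ν - d.x a.castSucc * d.e ν
              + d.τ a * (d.x a.castSucc ^ 2 * d.e ν) := by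
            conv_lhs => rw [sub_mul, ← hxe, mul_assoc, mul_assoc, ← hxe,
              ← mul_assoc (d.x a.castSucc), ← pow_two]
            abel
        _ = (d.x a.succ - d.x a.castSucc) * d.e ν
              + d.τ a * (d.x a.castSucc ^ 2 * d.e ν) := by rw [sub_mul]
    have K2 : d.τ a * ((d.x a.succ - d.x a.castSucc) * d.e ν)
        = (d.x a.succ - d.x a.castSucc) * (d.τ a * d.e ν) := by
      rw [sub_mul, mul_sub, hm1o, hm2o', sub_mul]
      abel
    have Kg : (d.x a.succ - d.x a.castSucc) * ((d.x a.succ - d.x a.castSucc) * d.e ν)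
        = (d.x a.castSucc ^ 2 + d.x a.succ ^ 2) * d.e ν := by
      simp only [sub_mul, mul_sub, add_mul, pow_two, mul_assoc]
      rw [hxx]
      abel
    have o3 : ∀ m : M, (df * ((d.x a.succ - d.x a.castSucc) * d.e ν)) • m = 0 := by
      intro m
      have h0 : (d.x a.succ ^ 2 * (df * (d.τ a * d.e ν))) • m = 0 := by
        rw [mul_smul, e2, smul_zero]
      have hrw : d.x a.succ ^ 2 * (df * (d.τ a * d.e ν))
          = df * ((d.x a.succ - d.x a.castSucc) * d.e ν)
            + df * (d.τ a * d.e ν) * d.x a.castSucc ^ 2 := by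
        rw [← mul_assoc, hcd2, mul_assoc, K1, mul_add, hxe2 a.castSucc,
          ← mul_assoc (d.τ a), ← mul_assoc df (d.τ a * d.e ν)]
      have h1 : (df * (d.τ a * d.e ν) * d.x a.castSucc ^ 2) • m = 0 := by
        rw [mul_smul]; exact e2 _
      rw [hrw, add_smul, h1, add_zero] at h0
      exact h0
    have o4 : ∀ m : M,
        (sf * ((d.x a.succ - d.x a.castSucc) * (d.τ a * d.e ν))) • m = 0 := by
      intro m
      have h := E1' ((d.x a.succ - d.x a.castSucc) • m)
      rw [← mul_smul, ← mul_smul] at h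
      have h1 : sf * (d.τ a * d.e ν) * (d.x a.succ - d.x a.castSucc)
          = sf * ((d.x a.succ - d.x a.castSucc) * (d.τ a * d.e ν)) := by
        rw [mul_assoc, mul_assoc, hEg, K2]
      have h2 : df * d.e ν * (d.x a.succ - d.x a.castSucc)
          = df * ((d.x a.succ - d.x a.castSucc) * d.e ν) := by
        rw [mul_assoc, hEg]
      rw [h1, h2, o3 m, add_zero] at h
      exact h
    have o5 : ∀ m : M,
        (sf * ((d.x a.castSucc ^ 2 + d.x a.succ ^ 2) * d.e ν)) • m = 0 := by
      intro m
      have h0 : (d.x a.succ ^ 2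
          * (sf * ((d.x a.succ - d.x a.castSucc) * (d.τ a * d.e ν)))) • m = 0 := by
        rw [mul_smul, o4, smul_zero]
      have hg : (d.x a.succ - d.x a.castSucc) * (d.τ a * d.e ν)
          = d.τ a * d.e ν * (d.x a.succ - d.x a.castSucc) := by
        rw [← K2, mul_assoc, hEg]
      have hrw : d.x a.succ ^ 2
            * (sf * ((d.x a.succ - d.x a.castSucc) * (d.τ a * d.e ν)))
          = sf * ((d.x a.castSucc ^ 2 + d.x a.succ ^ 2) * d.e ν)
            + sf * (d.τ a * d.e ν)
              * (d.x a.castSucc ^ 2 * (d.x a.succ - d.x a.castSucc)) := by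
        rw [← mul_assoc, hcs2, mul_assoc, hg, ← mul_assoc (d.x a.succ ^ 2), K1]
        rw [add_mul, mul_assoc (d.x a.succ - d.x a.castSucc), hEg, Kg]
        rw [mul_assoc (d.τ a), hxe2, mul_assoc (d.e ν), ← mul_assoc (d.τ a) (d.e ν),
          mul_add, ← mul_assoc sf (d.τ a * d.e ν)]
      have hel : df * d.e ν * (d.x a.castSucc ^ 2 * (d.x a.succ - d.x a.castSucc))
          = d.x a.castSucc ^ 2 * (df * ((d.x a.succ - d.x a.castSucc) * d.e ν)) := by
        rw [mul_assoc, ← mul_assoc (d.e ν), ← hxe2, mul_assoc (d.x a.castSucc ^ 2),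
          hEg, ← mul_assoc, ← hcd2, mul_assoc]
      have h1 : (sf * (d.τ a * d.e ν)
          * (d.x a.castSucc ^ 2 * (d.x a.succ - d.x a.castSucc))) • m = 0 := by
        rw [mul_smul]
        have h := E1' ((d.x a.castSucc ^ 2 * (d.x a.succ - d.x a.castSucc)) • m)
        have h2 : (df * d.e ν) • ((d.x a.castSucc ^ 2
            * (d.x a.succ - d.x a.castSucc)) • m) = 0 := by
          rw [← mul_smul, hel, mul_smul, o3, smul_zero]
        rw [h2, add_zero] at h
        exact h
      rw [hrw, add_smul, h1, add_zero] at h0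
      exact h0
    have hSsf : (d.x a.castSucc ^ 2 + d.x a.succ ^ 2) * sf
        = sf * (d.x a.castSucc ^ 2 + d.x a.succ ^ 2) := by
      rw [add_mul, mul_add, hcs2, hcs2]
    refine ⟨?_, ?_, ?_⟩ <;> intro m
    · rw [hp, pow_one]
      have hel : df * (d.x a.castSucc - d.x a.succ) * d.e ν
          = -(df * ((d.x a.succ - d.x a.castSucc) * d.e ν)) := by
        rw [← neg_sub (d.x a.succ), mul_neg, neg_mul, mul_assoc]
      rw [hel, neg_smul, o3 m, neg_zero]
    · rw [hp, pow_one, hSsf, mul_assoc]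
      exact o5 m
    · rw [hp, pow_one, mul_assoc]
      exact o5 m
end
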